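/- arXiv:1601.04492 — 7 statements merged into one kernel-verified Lean document; each statement's English description precedes it below -/
import Mathlib

section
/- Let n ≥ 1, p ∈ ℝ with p ≠ 1, c > 0, and let w be the fundamental solution of the p-Laplace equation, i.e. w(x) = v(|x|) with v'(r) = −c·r^{(1−n)/(p−1)}. Let N ≥ 1, a_1,…,a_N > 0, and y_1,…,y_N ∈ ℝⁿ, and define V(x) := Σ_{i=1}^N a_i w(x − y_i). Then at every point x with x ≠ y_i for all i and ∇V(x) ≠ 0, one has Δ_p V(x) = −c·((p−2)(p+n−2)/(p−1))·|∇V(x)|^{p−2}·Σ_{i=1}^N a_i·sin²θ_i / |x − y_i|^{(p+n−2)/(p−1)}, where sin²θ_i := 1 − ⟨x − y_i, ∇V(x)⟩²/(|x − y_i|²·|∇V(x)|²). -/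
open Filter Topology RealInnerProductSpace

/-- The Hessian of `u` at `x`, as a bilinear form evaluated at `(v, w)`. -/
noncomputable def hess {n : ℕ} (u : EuclideanSpace ℝ (Fin n) → ℝ)
    (x v w : EuclideanSpace ℝ (Fin n)) : ℝ :=
  iteratedFDeriv ℝ 2 u x ![v, w]

/-- The Laplacian of `u` at `x`: the trace of the Hessian. -/
noncomputable def lap {n : ℕ} (u : EuclideanSpace ℝ (Fin n) → ℝ)
    (x : EuclideanSpace ℝ (Fin n)) : ℝ :=
  ∑ i, hess u x (EuclideanSpace.single i 1) (EuclideanSpace.single i 1)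

/-- The `p`-Laplacian of `u` at a point `x` where `∇u(x) ≠ 0`:
`Δ_p u(x) = |∇u(x)|^{p−2}·((p−2)·⟨∇u(x), (Hu(x))∇u(x)⟩/|∇u(x)|² + Δu(x))`. -/
noncomputable def pLap {n : ℕ} (p : ℝ) (u : EuclideanSpace ℝ (Fin n) → ℝ)
    (x : EuclideanSpace ℝ (Fin n)) : ℝ :=
  ‖gradient u x‖ ^ (p - 2) *
    ((p - 2) * hess u x (gradient u x) (gradient u x) / ‖gradient u x‖ ^ 2 + lap u x)

lemma hasFDerivAt_norm_sub' {E : Type*} [NormedAddCommGroup E] [InnerProductSpace ℝ E]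
    {y z : E} (h : z ≠ y) :
    HasFDerivAt (fun w => ‖w - y‖) (‖z - y‖⁻¹ • ((innerSL ℝ (z - y)))) z := by
  have hne : z - y ≠ 0 := sub_ne_zero.2 h
  have hpos : (0:ℝ) < ‖z - y‖ := norm_pos_iff.2 hne
  have h1 : HasFDerivAt (fun w : E => ‖w - y‖ ^ 2) (2 • (innerSL ℝ (z - y))) z := by
    simpa using ((hasFDerivAt_id z).sub_const y).norm_sq
  have h2 : HasDerivAt Real.sqrt (1 / (2 * Real.sqrt (‖z - y‖ ^ 2))) (‖z - y‖ ^ 2) :=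
    Real.hasDerivAt_sqrt (by positivity)
  have h3 := h2.comp_hasFDerivAt z h1
  have heq : (fun w : E => Real.sqrt (‖w - y‖ ^ 2)) = fun w => ‖w - y‖ := by
    funext w; rw [Real.sqrt_sq (norm_nonneg _)]
  rw [Function.comp_def, heq] at h3
  refine h3.congr_fderiv ?_
  symm
  rw [Real.sqrt_sq hpos.le]
  ext w
  simp only [ContinuousLinearMap.smul_apply]
  rw [two_smul]
  field_simp
  ring

set_option maxHeartbeats 2000000 in
/-- explicit formula for the p-Laplacian of a superposition
`V(x) = Σ aᵢ w(x − yᵢ)` of translates of the fundamental solution `w(x) = v(|x|)`,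
`v'(r) = −c·r^{(1−n)/(p−1)}`:
`Δ_p V(x) = −c·((p−2)(p+n−2)/(p−1))·|∇V(x)|^{p−2}·Σ aᵢ sin²θᵢ/|x−yᵢ|^{(p+n−2)/(p−1)}`,
wherever `x ≠ yᵢ` for all `i` and `∇V(x) ≠ 0`. -/
theorem stmt4 {n : ℕ} (hn : 1 ≤ n) (p c : ℝ) (hp : p ≠ 1) (hc : 0 < c)
    (v : ℝ → ℝ) (hv : ContDiffOn ℝ 2 v (Set.Ioi 0))
    (hv' : ∀ r : ℝ, 0 < r → deriv v r = -c * r ^ ((1 - n) / (p - 1)))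
    (N : ℕ) (hN : 1 ≤ N) (a : Fin N → ℝ) (ha : ∀ i, 0 < a i)
    (y : Fin N → EuclideanSpace ℝ (Fin n))
    (V : EuclideanSpace ℝ (Fin n) → ℝ) (hV : V = fun z => ∑ i, a i * v ‖z - y i‖)
    (x : EuclideanSpace ℝ (Fin n)) (hx : ∀ i, x ≠ y i) (hgrad : gradient V x ≠ 0) :
    pLap p V x =
      -c * ((p - 2) * (p + n - 2) / (p - 1)) * ‖gradient V x‖ ^ (p - 2) *
        ∑ i, a i *
          (1 - ⟪x - y i, gradient V x⟫ ^ 2 / (‖x - y i‖ ^ 2 * ‖gradient V x‖ ^ 2)) /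
          ‖x - y i‖ ^ ((p + n - 2) / (p - 1)) := by
  subst hV
  have hp1 : p - 1 ≠ 0 := sub_ne_zero.2 hp
  set α : ℝ := (1 - n) / (p - 1) with hα
  -- v is differentiable on Ioi 0 with the given derivative
  have hvd : ∀ r : ℝ, 0 < r → HasDerivAt v (-c * r ^ α) r := by
    intro r hr
    have : DifferentiableAt ℝ v r :=
      ((hv.differentiableOn (by norm_num)).differentiableAt (Ioi_mem_nhds hr))
    have h := this.hasDerivAt
    rwa [hv' r hr] at h
  -- the first derivative formula
  set F : EuclideanSpace ℝ (Fin n) → (EuclideanSpace ℝ (Fin n) →L[ℝ] ℝ) :=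
    fun z => ∑ i, (a i * (-c * ‖z - y i‖ ^ (α - 1))) • innerSL ℝ (z - y i) with hF
  have claim1 : ∀ z : EuclideanSpace ℝ (Fin n), (∀ i, z ≠ y i) → HasFDerivAt (fun z => ∑ i, a i * v ‖z - y i‖) (F z) z := by
    intro (z : EuclideanSpace ℝ (Fin n)) hz
    apply HasFDerivAt.fun_sum
    intro i _
    have hri : (0:ℝ) < ‖z - y i‖ := norm_pos_iff.2 (sub_ne_zero.2 (hz i))
    have h0 := (hvd _ hri).comp_hasFDerivAt z (hasFDerivAt_norm_sub' (hz i))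
    have h1 := h0.const_mul (a i)
    refine h1.congr_fderiv ?_
    symm
    rw [smul_smul, smul_smul]
    congr 1
    rw [Real.rpow_sub_one hri.ne']
    field_simp
  -- the fderiv agrees with F near x
  have hev : (fun z => fderiv ℝ (fun z => ∑ i, a i * v ‖z - y i‖) z) =ᶠ[𝓝 x] F := by
    have hU : ∀ᶠ z in 𝓝 x, ∀ i, z ≠ y i :=
      eventually_all.2 fun i => eventually_ne_nhds (hx i)
    exact hU.mono fun z hz => (claim1 z hz).fderiv
  -- second derivative of each piece
  have hri : ∀ i, (0:ℝ) < ‖x - y i‖ := fun i => norm_pos_iff.2 (sub_ne_zero.2 (hx i))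
  set B : Fin N → (EuclideanSpace ℝ (Fin n)) →L[ℝ] (EuclideanSpace ℝ (Fin n)) →L[ℝ] ℝ :=
    fun i => (a i * (-c * ‖x - y i‖ ^ (α - 1))) •
        (((innerSL ℝ (E := EuclideanSpace ℝ (Fin n))).comp
          (ContinuousLinearMap.id ℝ (EuclideanSpace ℝ (Fin n)))) :
            EuclideanSpace ℝ (Fin n) →L[ℝ] EuclideanSpace ℝ (Fin n) →L[ℝ] ℝ) +
      ((a i * (-c * ((α - 1) * ‖x - y i‖ ^ (α - 1 - 1) * ‖x - y i‖⁻¹))) •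
          innerSL ℝ (x - y i)).smulRight (innerSL ℝ (x - y i)) with hB
  have hFD : HasFDerivAt F (∑ i, B i) x := by
    apply HasFDerivAt.fun_sum
    intro i _
    have hs : HasFDerivAt (fun z => a i * (-c * ‖z - y i‖ ^ (α - 1)))
        ((a i * (-c * ((α - 1) * ‖x - y i‖ ^ (α - 1 - 1) * ‖x - y i‖⁻¹))) •
          innerSL ℝ (x - y i)) x := by
      have h0 := (Real.hasDerivAt_rpow_const (p := α - 1)
        (Or.inl (hri i).ne')).comp_hasFDerivAt x (hasFDerivAt_norm_sub' (hx i))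
      have h1 := (h0.const_mul (-c)).const_mul (a i)
      refine h1.congr_fderiv ?_
      symm
      rw [smul_smul, smul_smul, smul_smul]
      congr 1
      ring
    have hg : HasFDerivAt (fun z : EuclideanSpace ℝ (Fin n) => innerSL ℝ (z - y i))
        ((innerSL ℝ (E := EuclideanSpace ℝ (Fin n))).comp
          (ContinuousLinearMap.id ℝ (EuclideanSpace ℝ (Fin n)))) x := by
      exact (innerSL ℝ (E := EuclideanSpace ℝ (Fin n))).hasFDerivAt.comp x
        ((hasFDerivAt_id x).sub_const (y i))
    have := hs.smul hg
    exact this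
  have hess_eq : ∀ u w : EuclideanSpace ℝ (Fin n),
      hess (fun z => ∑ i, a i * v ‖z - y i‖) x u w =
        ∑ i, ((a i * (-c * ‖x - y i‖ ^ (α - 1))) * ⟪u, w⟫ +
          (a i * (-c * ((α - 1) * ‖x - y i‖ ^ (α - 1 - 1) * ‖x - y i‖⁻¹)) *
            ⟪x - y i, u⟫) * ⟪x - y i, w⟫) := by
    intro u w
    rw [hess, iteratedFDeriv_two_apply]
    have h2 : fderiv ℝ (fderiv ℝ (fun z => ∑ i, a i * v ‖z - y i‖)) x = ∑ i, B i := by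
      rw [hev.fderiv_eq, hFD.fderiv]
    rw [h2]
    simp only [Matrix.cons_val_zero, Matrix.cons_val_one, Matrix.head_cons,
      ContinuousLinearMap.sum_apply, hB, ContinuousLinearMap.add_apply,
      ContinuousLinearMap.smul_apply, ContinuousLinearMap.comp_apply,
      ContinuousLinearMap.smulRight_apply, ContinuousLinearMap.id_apply,
      innerSL_apply_apply, smul_eq_mul]
  have singlesum : ∀ z : EuclideanSpace ℝ (Fin n),
      ∑ j, (⟪z, EuclideanSpace.single j (1:ℝ)⟫ * ⟪z, EuclideanSpace.single j (1:ℝ)⟫)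
        = ‖z‖ ^ 2 := by
    intro z
    rw [← real_inner_self_eq_norm_sq]
    simp [PiLp.inner_apply, RCLike.inner_apply, EuclideanSpace.inner_single_right]
    rw [← real_inner_self_eq_norm_sq, PiLp.inner_apply]
    simp [sq]
  have lap_eq : lap (fun z => ∑ i, a i * v ‖z - y i‖) x =
      ∑ i, ((n : ℝ) * (a i * (-c * ‖x - y i‖ ^ (α - 1))) +
        (a i * (-c * ((α - 1) * ‖x - y i‖ ^ (α - 1 - 1) * ‖x - y i‖⁻¹))) *
          ‖x - y i‖ ^ 2) := by
    rw [lap]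
    simp only [hess_eq]
    rw [Finset.sum_comm]
    refine Finset.sum_congr rfl fun i _ => ?_
    rw [Finset.sum_add_distrib]
    congr 1
    · have : ∀ j : Fin n, ⟪EuclideanSpace.single j (1:ℝ), EuclideanSpace.single j (1:ℝ)⟫ = (1:ℝ) := by
        intro j
        rw [real_inner_self_eq_norm_sq, EuclideanSpace.norm_single]
        norm_num
      simp [this, Finset.sum_const, Finset.card_univ, mul_comm]
    · rw [← singlesum (x - y i), Finset.mul_sum]
      refine Finset.sum_congr rfl fun j _ => ?_
      ring
  set G := gradient (fun z => ∑ i, a i * v ‖z - y i‖) x with hG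
  have hgpos : (0:ℝ) < ‖G‖ := norm_pos_iff.2 hgrad
  rw [pLap, ← hG, hess_eq, lap_eq]
  clear_value G
  clear hFD hev claim1 hB hF hgrad
  have hexp : (p + (n:ℝ) - 2) / (p - 1) = -(α - 1) := by
    rw [hα]; field_simp; ring
  have key : ∀ i : Fin N,
      (p - 2) * ((a i * (-c * ‖x - y i‖ ^ (α - 1))) * ⟪G, G⟫ +
        (a i * (-c * ((α - 1) * ‖x - y i‖ ^ (α - 1 - 1) * ‖x - y i‖⁻¹)) *
          ⟪x - y i, G⟫) * ⟪x - y i, G⟫) / ‖G‖ ^ 2 +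
      ((n : ℝ) * (a i * (-c * ‖x - y i‖ ^ (α - 1))) +
        (a i * (-c * ((α - 1) * ‖x - y i‖ ^ (α - 1 - 1) * ‖x - y i‖⁻¹))) * ‖x - y i‖ ^ 2)
      = (-c * ((p - 2) * (p + ↑n - 2) / (p - 1))) *
          (a i * (1 - ⟪x - y i, G⟫ ^ 2 / (‖x - y i‖ ^ 2 * ‖G‖ ^ 2)) /
            ‖x - y i‖ ^ ((p + (n:ℝ) - 2) / (p - 1))) := by
    intro i
    have hr : ‖x - y i‖ ≠ 0 := (hri i).ne'
    have hgn : ‖G‖ ≠ 0 := hgpos.ne'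
    rw [real_inner_self_eq_norm_sq]
    have he2 : (α - 1) + (p + (n:ℝ) - 2) / (p - 1) = 0 := by rw [hα]; field_simp; ring
    have h2 : ‖x - y i‖ ^ (α - 1) * ‖x - y i‖ ^ ((p + (n:ℝ) - 2) / (p - 1)) = 1 := by
      rw [← Real.rpow_add (hri i), he2, Real.rpow_zero]
    have he1 : α - 1 - 1 + 1 = α - 1 := by ring
    have h1 : ‖x - y i‖ ^ (α - 1 - 1) * ‖x - y i‖ = ‖x - y i‖ ^ (α - 1) := by
      rw [← Real.rpow_add_one (hri i).ne', he1]
    have hA2n : ‖x - y i‖ ^ (α - 1 - 1) ≠ 0 := (Real.rpow_pos_of_pos (hri i) _).ne'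
    generalize hq : (⟪x - y i, G⟫ : ℝ) = q
    generalize hA2 : ‖x - y i‖ ^ (α - 1 - 1) = A2 at h1 hA2n ⊢
    generalize hA1 : ‖x - y i‖ ^ (α - 1) = A1 at h1 h2 ⊢
    generalize hA3 : ‖x - y i‖ ^ ((p + (n:ℝ) - 2) / (p - 1)) = A3 at h2 ⊢
    generalize hgg : ‖G‖ = g at hgn ⊢
    generalize hrr : ‖x - y i‖ = r at hr h1 ⊢
    rw [← h1] at h2 ⊢
    have h3 : A3 = (A2 * r)⁻¹ := eq_inv_of_mul_eq_one_right h2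
    rw [h3, hα]
    clear hq hA2 hA1 hA3 hgg hrr h1 h2 h3 he1 he2 hexp hG hgpos hess_eq lap_eq
      singlesum hvd hv' hv hri hx
    clear B F G x y v
    field_simp
    ring
  have split : (p - 2) * (∑ i, ((a i * (-c * ‖x - y i‖ ^ (α - 1))) * ⟪G, G⟫ +
        (a i * (-c * ((α - 1) * ‖x - y i‖ ^ (α - 1 - 1) * ‖x - y i‖⁻¹)) *
          ⟪x - y i, G⟫) * ⟪x - y i, G⟫)) / ‖G‖ ^ 2 +
      ∑ i, ((n : ℝ) * (a i * (-c * ‖x - y i‖ ^ (α - 1))) +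
        (a i * (-c * ((α - 1) * ‖x - y i‖ ^ (α - 1 - 1) * ‖x - y i‖⁻¹))) * ‖x - y i‖ ^ 2)
      = ∑ i, ((p - 2) * ((a i * (-c * ‖x - y i‖ ^ (α - 1))) * ⟪G, G⟫ +
        (a i * (-c * ((α - 1) * ‖x - y i‖ ^ (α - 1 - 1) * ‖x - y i‖⁻¹)) *
          ⟪x - y i, G⟫) * ⟪x - y i, G⟫) / ‖G‖ ^ 2 +
      ((n : ℝ) * (a i * (-c * ‖x - y i‖ ^ (α - 1))) +
        (a i * (-c * ((α - 1) * ‖x - y i‖ ^ (α - 1 - 1) * ‖x - y i‖⁻¹))) * ‖x - y i‖ ^ 2)) := by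
    rw [Finset.mul_sum, Finset.sum_div, ← Finset.sum_add_distrib]
  rw [split, Finset.sum_congr rfl fun i _ => key i, ← Finset.mul_sum]
  ring
end

section
/- Let n ≥ 1, p ∈ ℝ with p ≠ 1, c > 0, and let w be the fundamental solution of the p-Laplace equation, i.e. w(x) = v(|x|) with v'(r) = −c·r^{(1−n)/(p−1)}. Let a_1,…,a_N > 0, y_1,…,y_N ∈ ℝⁿ, and V(x) := Σ_{i=1}^N a_i w(x − y_i). Then Δ_p V has constant sign wherever it is defined: at every x with x ≠ y_i for all i and ∇V(x) ≠ 0, (a) if (p−2)(p+n−2)/(p−1) > 0 then Δ_p V(x) ≤ 0; (b) if (p−2)(p+n−2)/(p−1) < 0 then Δ_p V(x) ≥ 0; (c) if p = 2, or n = 1, or p + n = 2, then Δ_p V(x) = 0. -/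
open Filter Topology RealInnerProductSpace

section aux
variable {E : Type*} [NormedAddCommGroup E] [InnerProductSpace ℝ E]

lemma my_hasFDerivAt_norm {x : E} (hx : x ≠ 0) :
    HasFDerivAt (fun z : E => ‖z‖) (‖x‖⁻¹ • innerSL ℝ x) x := by
  have hn : ‖x‖ ≠ 0 := norm_ne_zero_iff.2 hx
  have h1 : HasFDerivAt (fun z : E => ‖z‖ ^ 2) (2 • innerSL ℝ x) x :=
    (hasStrictFDerivAt_norm_sq x).hasFDerivAt
  have h2 : HasDerivAt Real.sqrt (1 / (2 * Real.sqrt (‖x‖ ^ 2))) (‖x‖ ^ 2) :=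
    Real.hasDerivAt_sqrt (by positivity)
  have h3 := h2.comp_hasFDerivAt x h1
  rw [show Real.sqrt ∘ (fun z : E => ‖z‖ ^ 2) = fun z : E => ‖z‖ from
    funext fun z => Real.sqrt_sq (norm_nonneg z)] at h3
  convert h3 using 1
  · rfl
  · rfl
  rw [Real.sqrt_sq (norm_nonneg x)]
  ext w
  simp only [ContinuousLinearMap.smul_apply, smul_eq_mul, one_div]
  rw [two_smul]
  simp only [ContinuousLinearMap.add_apply, innerSL_apply_apply]
  field_simp
  ring

lemma my_hasFDerivAt_norm_sub (y : E) {z : E} (hz : z ≠ y) :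
    HasFDerivAt (fun w : E => ‖w - y‖) (‖z - y‖⁻¹ • innerSL ℝ (z - y)) z := by
  have h1 := my_hasFDerivAt_norm (sub_ne_zero.2 hz)
  have h2 : HasFDerivAt (fun w : E => w - y) (ContinuousLinearMap.id ℝ E) z :=
    (hasFDerivAt_id z).sub_const y
  simpa [Function.comp_def] using h1.comp z h2

lemma my_fderiv_v {v : ℝ → ℝ} (hv : ContDiffOn ℝ 2 v (Set.Ioi 0))
    {c β : ℝ} (hv' : ∀ r : ℝ, 0 < r → deriv v r = -c * r ^ β)
    (y : E) {z : E} (hz : z ≠ y) :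
    HasFDerivAt (fun w : E => v ‖w - y‖)
      ((-c * ‖z - y‖ ^ (β - 1)) • innerSL ℝ (z - y)) z := by
  have hr0 : (0:ℝ) < ‖z - y‖ := norm_pos_iff.2 (sub_ne_zero.2 hz)
  have hρ := my_hasFDerivAt_norm_sub y hz
  have hvd : HasDerivAt v (deriv v ‖z - y‖) ‖z - y‖ :=
    ((hv.contDiffAt (Ioi_mem_nhds hr0)).differentiableAt two_ne_zero).hasDerivAt
  have h3 := hvd.comp_hasFDerivAt z hρ
  rw [hv' _ hr0] at h3
  convert h3 using 1
  · rfl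
  · rfl
  · rfl
  rw [smul_smul, Real.rpow_sub hr0, Real.rpow_one]
  congr 1
  field_simp

lemma my_fderiv_phi (c β : ℝ) (y : E) {z : E} (hz : z ≠ y) :
    HasFDerivAt (fun w : E => -c * ‖w - y‖ ^ β)
      ((-c * (β * ‖z - y‖ ^ (β - 2))) • innerSL ℝ (z - y)) z := by
  have hr0 : (0:ℝ) < ‖z - y‖ := norm_pos_iff.2 (sub_ne_zero.2 hz)
  have hρ := my_hasFDerivAt_norm_sub y hz
  have hd : HasDerivAt (fun t : ℝ => -c * t ^ β)
      (-c * (β * ‖z - y‖ ^ (β - 1))) ‖z - y‖ :=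
    (Real.hasDerivAt_rpow_const (Or.inl hr0.ne')).const_mul (-c)
  have h3 := hd.comp_hasFDerivAt z hρ
  convert h3 using 1
  · rfl
  · rfl
  · rfl
  rw [smul_smul]
  congr 1
  rw [show β - 2 = β - 1 - 1 by ring, Real.rpow_sub hr0 (β-1) 1, Real.rpow_one]
  field_simp

noncomputable def mySL (E : Type*) [NormedAddCommGroup E] [InnerProductSpace ℝ E] :
    E →L[ℝ] E →L[ℝ] ℝ :=
  (isBoundedBilinearMap_inner (𝕜 := ℝ) (E := E)).toContinuousLinearMap

@[simp] lemma mySL_apply (u w : E) : mySL E u w = ⟪u, w⟫ := rfl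

lemma mySL_eq_innerSL (u : E) : mySL E u = innerSL ℝ u := by
  ext w; simp

lemma my_fderiv_innerSL (y : E) (z : E) :
    HasFDerivAt (fun w : E => mySL E (w - y)) (mySL E) z := by
  have h2 : HasFDerivAt (fun w : E => w - y) (ContinuousLinearMap.id ℝ E) z :=
    (hasFDerivAt_id z).sub_const y
  have h := ((mySL E).hasFDerivAt (x := z - y)).comp z h2
  rwa [ContinuousLinearMap.comp_id] at h

lemma my_fderiv_G (A c β : ℝ) (y : E) {z : E} (hz : z ≠ y) :
    HasFDerivAt (fun w : E => (A * (-c * ‖w - y‖ ^ β)) • mySL E (w - y))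
      ((A * (-c * ‖z - y‖ ^ β)) • (mySL E) +
        (ContinuousLinearMap.smulRight
          ((A * (-c * (β * ‖z - y‖ ^ (β - 2)))) • innerSL ℝ (z - y))
          (mySL E (z - y)))) z := by
  have hφ : HasFDerivAt (fun w : E => A * (-c * ‖w - y‖ ^ β))
      ((A * (-c * (β * ‖z - y‖ ^ (β - 2)))) • innerSL ℝ (z - y)) z := by
    have h := (my_fderiv_phi c β y hz).const_mul A
    rwa [smul_smul] at h
  exact hφ.smul (my_fderiv_innerSL y z)

end aux

lemma inner_sq_of_dim_one {n : ℕ} (h : n = 1) (u G : EuclideanSpace ℝ (Fin n)) :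
    ⟪u, G⟫ * ⟪u, G⟫ = ‖u‖ ^ 2 * ‖G‖ ^ 2 := by
  subst h
  rw [← real_inner_self_eq_norm_sq, ← real_inner_self_eq_norm_sq]
  simp only [PiLp.inner_apply, RCLike.inner_apply, conj_trivial, Fin.sum_univ_one]
  ring

/-- the p-Laplacian of a superposition `V(x) = Σ aᵢ w(x − yᵢ)` of
translates of the fundamental solution has constant sign wherever it is defined:
(a) if `(p−2)(p+n−2)/(p−1) > 0` then `Δ_p V ≤ 0`;
(b) if `(p−2)(p+n−2)/(p−1) < 0` then `Δ_p V ≥ 0`;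
(c) if `p = 2`, or `n = 1`, or `p + n = 2`, then `Δ_p V = 0`. -/
theorem stmt5 {n : ℕ} (hn : 1 ≤ n) (p c : ℝ) (hp : p ≠ 1) (hc : 0 < c)
    (v : ℝ → ℝ) (hv : ContDiffOn ℝ 2 v (Set.Ioi 0))
    (hv' : ∀ r : ℝ, 0 < r → deriv v r = -c * r ^ ((1 - n) / (p - 1)))
    (N : ℕ) (hN : 1 ≤ N) (a : Fin N → ℝ) (ha : ∀ i, 0 < a i)
    (y : Fin N → EuclideanSpace ℝ (Fin n))
    (V : EuclideanSpace ℝ (Fin n) → ℝ) (hV : V = fun z => ∑ i, a i * v ‖z - y i‖)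
    (x : EuclideanSpace ℝ (Fin n)) (hx : ∀ i, x ≠ y i) (hgrad : gradient V x ≠ 0) :
    (0 < (p - 2) * (p + n - 2) / (p - 1) → pLap p V x ≤ 0) ∧
    ((p - 2) * (p + n - 2) / (p - 1) < 0 → 0 ≤ pLap p V x) ∧
    ((p = 2 ∨ n = 1 ∨ p + n = 2) → pLap p V x = 0) := by
  have hp1 : p - 1 ≠ 0 := sub_ne_zero.2 hp
  set β : ℝ := (1 - (n:ℝ)) / (p - 1) with hβ
  set K : ℝ := (p - 2) * (p + (n:ℝ) - 2) / (p - 1) with hK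
  subst hV
  have hr : ∀ i, (0:ℝ) < ‖x - y i‖ := fun i => norm_pos_iff.2 (sub_ne_zero.2 (hx i))
  -- first derivative on the open set where z ≠ y i for all i
  set W : EuclideanSpace ℝ (Fin n) → (EuclideanSpace ℝ (Fin n) →L[ℝ] ℝ) :=
    fun z => ∑ i, (a i * (-c * ‖z - y i‖ ^ (β - 1))) • mySL _ (z - y i) with hWdef
  have hW : ∀ z, (∀ i, z ≠ y i) →
      HasFDerivAt (fun w => ∑ i, a i * v ‖w - y i‖) (W z) z := by
    intro z hz
    apply HasFDerivAt.fun_sum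
    intro i _
    have h := (my_fderiv_v hv hv' (y i) (hz i)).const_mul (a i)
    rwa [smul_smul, ← mySL_eq_innerSL] at h
  -- gradient
  set G : EuclideanSpace ℝ (Fin n) :=
    ∑ i, (a i * (-c * ‖x - y i‖ ^ (β - 1))) • (x - y i) with hGdef
  have hGrad : HasGradientAt (fun w => ∑ i, a i * v ‖w - y i‖) G x := by
    rw [hasGradientAt_iff_hasFDerivAt]
    convert hW x hx using 1
    · rfl
    · rfl
    · rfl
    · rfl
    ext w
    rw [InnerProductSpace.toDual_apply_apply]
    simp only [hWdef, hGdef, ContinuousLinearMap.sum_apply, ContinuousLinearMap.smul_apply,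
      mySL_apply, smul_eq_mul, sum_inner, real_inner_smul_left]
  have hGval : gradient (fun w => ∑ i, a i * v ‖w - y i‖) x = G := hGrad.gradient
  have hGne : G ≠ 0 := hGval ▸ hgrad
  have hGn : (0:ℝ) < ‖G‖ := norm_pos_iff.2 hGne
  -- second derivative
  have hH : HasFDerivAt W (∑ i, ((a i * (-c * ‖x - y i‖ ^ (β - 1))) • (mySL _) +
      ContinuousLinearMap.smulRight
        ((a i * (-c * ((β - 1) * ‖x - y i‖ ^ (β - 1 - 2)))) • innerSL ℝ (x - y i))
        (mySL _ (x - y i)))) x := by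
    rw [hWdef]
    exact HasFDerivAt.fun_sum fun i _ => my_fderiv_G (a i) c (β - 1) (y i) (hx i)
  have hxs : fderiv ℝ (fun w => ∑ i, a i * v ‖w - y i‖) =ᶠ[𝓝 x] W := by
    have hs : IsOpen {z : EuclideanSpace ℝ (Fin n) | ∀ i, z ≠ y i} := by
      rw [Set.setOf_forall]
      exact isOpen_iInter_of_finite fun i => isOpen_compl_singleton
    filter_upwards [hs.mem_nhds hx] with z hz
    exact (hW z hz).fderiv
  have hfd2 : fderiv ℝ (fderiv ℝ (fun w => ∑ i, a i * v ‖w - y i‖)) x =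
      ∑ i, ((a i * (-c * ‖x - y i‖ ^ (β - 1))) • (mySL _) +
      ContinuousLinearMap.smulRight
        ((a i * (-c * ((β - 1) * ‖x - y i‖ ^ (β - 1 - 2)))) • innerSL ℝ (x - y i))
        (mySL _ (x - y i))) := by
    rw [Filter.EventuallyEq.fderiv_eq hxs]
    exact hH.fderiv
  have hhess : ∀ q w : EuclideanSpace ℝ (Fin n),
      hess (fun w => ∑ i, a i * v ‖w - y i‖) x q w =
      ∑ i, (a i * (-c * ‖x - y i‖ ^ (β - 1)) * ⟪q, w⟫ +
        a i * (-c * ((β - 1) * ‖x - y i‖ ^ (β - 1 - 2))) * ⟪x - y i, q⟫ * ⟪x - y i, w⟫) := by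
    intro q w
    rw [hess, iteratedFDeriv_two_apply, hfd2]
    simp only [Matrix.cons_val_zero, Matrix.cons_val_one, Matrix.head_cons,
      ContinuousLinearMap.sum_apply, ContinuousLinearMap.add_apply,
      ContinuousLinearMap.smul_apply, ContinuousLinearMap.smulRight_apply,
      mySL_apply, innerSL_apply_apply, smul_eq_mul]
  have hlap : lap (fun w => ∑ i, a i * v ‖w - y i‖) x =
      ∑ i, (a i * (-c * ‖x - y i‖ ^ (β - 1)) * n +
        a i * (-c * ((β - 1) * ‖x - y i‖ ^ (β - 1 - 2))) * ‖x - y i‖ ^ 2) := by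
    rw [lap]
    simp only [hhess]
    rw [Finset.sum_comm]
    refine Finset.sum_congr rfl fun i _ => ?_
    have h1 : ∀ j : Fin n, ⟪(EuclideanSpace.single j 1 : EuclideanSpace ℝ (Fin n)),
        EuclideanSpace.single j 1⟫ = (1:ℝ) := by intro j; simp
    have h2 : ∀ j : Fin n, ⟪x - y i, (EuclideanSpace.single j (1:ℝ))⟫ = (x - y i) j := by
      intro j; simp [EuclideanSpace.inner_single_right]
    have h3 : ∑ j, (x - y i) j * (x - y i) j = ‖x - y i‖ ^ 2 := by
      rw [EuclideanSpace.norm_eq, Real.sq_sqrt (by positivity)]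
      simp [Real.norm_eq_abs, sq_abs, sq]
    simp only [h1, h2, mul_one]
    rw [Finset.sum_add_distrib]
    congr 1
    · rw [Finset.sum_const, Finset.card_univ, Fintype.card_fin, nsmul_eq_mul]
      ring
    · rw [← h3, Finset.mul_sum]
      exact Finset.sum_congr rfl fun j _ => by ring
  -- the key formula
  have hg2 : ((‖G‖:ℝ) ^ 2) ≠ 0 := by positivity
  have key : pLap p (fun w => ∑ i, a i * v ‖w - y i‖) x =
      ‖G‖ ^ (p - 2) * (-(c * K) *
        ∑ i, a i * ‖x - y i‖ ^ (β - 1) *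
          (1 - ⟪x - y i, G⟫ * ⟪x - y i, G⟫ / (‖x - y i‖ ^ 2 * ‖G‖ ^ 2))) := by
    rw [pLap, hGval, hhess, hlap]
    congr 1
    rw [Finset.mul_sum, Finset.sum_div, ← Finset.sum_add_distrib, Finset.mul_sum]
    refine Finset.sum_congr rfl fun i _ => ?_
    have hrr : ‖x - y i‖ ^ (β - 1 - 2) = ‖x - y i‖ ^ (β - 1) / ‖x - y i‖ ^ 2 := by
      rw [Real.rpow_sub (hr i), show ((2:ℝ)) = ((2:ℕ):ℝ) by norm_num, Real.rpow_natCast]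
    rw [real_inner_self_eq_norm_sq, hrr, hβ, hK]
    have hri : (‖x - y i‖ : ℝ) ≠ 0 := (hr i).ne'
    field_simp
    ring
  -- nonnegativity of the sum
  have hterm : ∀ i, 0 ≤ a i * ‖x - y i‖ ^ (β - 1) *
      (1 - ⟪x - y i, G⟫ * ⟪x - y i, G⟫ / (‖x - y i‖ ^ 2 * ‖G‖ ^ 2)) := by
    intro i
    have hcs := real_inner_mul_inner_self_le (x - y i) G
    rw [real_inner_self_eq_norm_sq, real_inner_self_eq_norm_sq] at hcs
    have hdpos : (0:ℝ) < ‖x - y i‖ ^ 2 * ‖G‖ ^ 2 :=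
      mul_pos (pow_pos (hr i) 2) (pow_pos hGn 2)
    have h1 : ⟪x - y i, G⟫ * ⟪x - y i, G⟫ / (‖x - y i‖ ^ 2 * ‖G‖ ^ 2) ≤ 1 :=
      (div_le_one hdpos).2 hcs
    have h2 : (0:ℝ) ≤ ‖x - y i‖ ^ (β - 1) := Real.rpow_nonneg (norm_nonneg _) _
    exact mul_nonneg (mul_nonneg (ha i).le h2) (by linarith)
  have hsum : 0 ≤ ∑ i, a i * ‖x - y i‖ ^ (β - 1) *
      (1 - ⟪x - y i, G⟫ * ⟪x - y i, G⟫ / (‖x - y i‖ ^ 2 * ‖G‖ ^ 2)) :=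
    Finset.sum_nonneg fun i _ => hterm i
  have hgp : (0:ℝ) ≤ ‖G‖ ^ (p - 2) := Real.rpow_nonneg (norm_nonneg _) _
  clear hW hH hxs hfd2 hhess hlap hGrad hGval hgrad hv hv' hWdef hGdef
  clear_value K W G
  clear hβ W
  refine ⟨?_, ?_, ?_⟩
  · intro hK0
    rw [key]
    have h0 : -(c * K) ≤ 0 := neg_nonpos.2 (mul_nonneg hc.le hK0.le)
    exact mul_nonpos_iff.2 (Or.inl ⟨hgp, mul_nonpos_iff.2 (Or.inr ⟨h0, hsum⟩)⟩)
  · intro hK0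
    rw [key]
    have h0 : (0:ℝ) ≤ -(c * K) := neg_nonneg.2 (mul_nonpos_iff.2 (Or.inl ⟨hc.le, hK0.le⟩))
    exact mul_nonneg hgp (mul_nonneg h0 hsum)
  · rintro (h2 | h1 | hpn)
    · have hK0 : K = 0 := by rw [hK, h2]; ring
      rw [key, hK0]
      ring
    · have hz : ∀ i ∈ Finset.univ, a i * ‖x - y i‖ ^ (β - 1) *
          (1 - ⟪x - y i, G⟫ * ⟪x - y i, G⟫ / (‖x - y i‖ ^ 2 * ‖G‖ ^ 2)) = 0 := by
        intro i _
        have hd := inner_sq_of_dim_one h1 (x - y i) G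
        rw [hd, div_self (mul_pos (pow_pos (hr i) 2) (pow_pos hGn 2)).ne']
        ring
      rw [key, Finset.sum_congr rfl hz, Finset.sum_const_zero, mul_zero, mul_zero]
    · have hK0 : K = 0 := by
        rw [hK, show p + (n:ℝ) - 2 = 0 by linarith]
        ring
      rw [key, hK0]
      ring
end

section
/- Let n ≥ 1 and p > 2. Let c > 0 and let w be the fundamental solution of the p-Laplace equation, i.e. w(x) = v(|x|) with v'(r) = −c·r^{(1−n)/(p−1)}. Let a_1,…,a_N > 0, y_1,…,y_N ∈ ℝⁿ, and V(x) := Σ_{i=1}^N a_i w(x − y_i). Let K : ℝⁿ → ℝ be a concave C² function. Then at every point x with x ≠ y_i for all i and ∇(V+K)(x) ≠ 0, one has Δ_p(V + K)(x) ≤ 0. -/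
open Filter Topology RealInnerProductSpace

lemma antitone_deriv_nonpos {g : ℝ → ℝ} {t : ℝ} (hg : Antitone g)
    (hd : DifferentiableAt ℝ g t) : deriv g t ≤ 0 := by
  have h := hd.hasDerivAt
  rw [hasDerivAt_iff_tendsto_slope] at h
  have hsub : Set.Ioi t ⊆ {t}ᶜ := fun s hs => ne_of_gt hs
  have h' := h.mono_left (nhdsWithin_mono t hsub)
  refine le_of_tendsto h' ?_
  filter_upwards [self_mem_nhdsWithin] with s hs
  rw [slope_def_field]
  have h1 : g s ≤ g t := hg (le_of_lt hs)
  have h2 : (0:ℝ) < s - t := sub_pos.2 hs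
  exact div_nonpos_of_nonpos_of_nonneg (by linarith) h2.le

lemma hess_line {n : ℕ} {φ : EuclideanSpace ℝ (Fin n) → ℝ} {x : EuclideanSpace ℝ (Fin n)}
    (hφ : ContDiffAt ℝ 2 φ x) (ξ : EuclideanSpace ℝ (Fin n)) :
    hess φ x ξ ξ = deriv (deriv (fun t : ℝ => φ (x + t • ξ))) 0 := by
  have hline : ∀ t : ℝ, HasDerivAt (fun s : ℝ => x + s • ξ) ξ t := by
    intro t
    simpa using ((hasDerivAt_id t).smul_const ξ).const_add x
  have hev : ∀ᶠ z in 𝓝 x, DifferentiableAt ℝ φ z := by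
    filter_upwards [hφ.eventually (by simp)] with z hz
    exact hz.differentiableAt two_ne_zero
  have hLcont : Continuous (fun t : ℝ => x + t • ξ) := by continuity
  have hL0 : x + (0:ℝ) • ξ = x := by simp
  have hev2 : ∀ᶠ t in 𝓝 (0:ℝ), DifferentiableAt ℝ φ (x + t • ξ) := by
    have := hLcont.continuousAt (x := (0:ℝ))
    rw [ContinuousAt, hL0] at this
    exact this.eventually hev
  have hd1 : (deriv (fun s : ℝ => φ (x + s • ξ))) =ᶠ[𝓝 (0:ℝ)]
      fun t => (fderiv ℝ φ (x + t • ξ)) ξ := by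
    filter_upwards [hev2] with t ht
    exact (ht.hasFDerivAt.comp_hasDerivAt t (hline t)).deriv
  have hA : HasFDerivAt (fderiv ℝ φ) (fderiv ℝ (fderiv ℝ φ) x) x :=
    ((hφ.fderiv_right (m := 1) (by norm_num)).differentiableAt one_ne_zero).hasFDerivAt
  have h2 : HasDerivAt (fun t : ℝ => fderiv ℝ φ (x + t • ξ))
      (fderiv ℝ (fderiv ℝ φ) x ξ) 0 := by
    have hA' : HasFDerivAt (fderiv ℝ φ) (fderiv ℝ (fderiv ℝ φ) x) (x + (0:ℝ) • ξ) := by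
      rw [hL0]; exact hA
    have := hA'.comp_hasDerivAt (x := (0:ℝ)) (hline 0)
    exact this
  have h3 : HasDerivAt (fun t : ℝ => fderiv ℝ φ (x + t • ξ) ξ)
      (fderiv ℝ (fderiv ℝ φ) x ξ ξ) 0 := by
    simpa using h2.clm_apply (hasDerivAt_const (0:ℝ) ξ)
  rw [hess, iteratedFDeriv_two_apply]
  simp only [Matrix.cons_val_zero, Matrix.cons_val_one, Matrix.head_cons]
  rw [hd1.deriv_eq, h3.deriv]
section radial
variable {n : ℕ} {p c : ℝ}

lemma q_poly (w ξ : EuclideanSpace ℝ (Fin n)) (s : ℝ) :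
    ‖w + s • ξ‖^2 = ‖w‖^2 + 2*⟪w,ξ⟫*s + ‖ξ‖^2*s^2 := by
  rw [norm_add_sq_real, real_inner_smul_right, norm_smul]
  simp [mul_pow]
  ring

lemma q_hasDerivAt (w ξ : EuclideanSpace ℝ (Fin n)) (t : ℝ) :
    HasDerivAt (fun s : ℝ => ‖w + s • ξ‖^2) (2*⟪w,ξ⟫ + 2*t*‖ξ‖^2) t := by
  have h1 := ((hasDerivAt_id t).const_mul (2*⟪w,ξ⟫)).const_add (‖w‖^2)
  have h2 := (hasDerivAt_pow 2 t).const_mul (‖ξ‖^2)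
  have h := h1.add h2
  have heq : (fun s : ℝ => ‖w + s • ξ‖^2) =
      fun s : ℝ => (‖w‖^2 + 2*⟪w,ξ⟫*s) + ‖ξ‖^2*s^2 := by
    funext s; rw [q_poly]
  rw [heq]
  refine h.congr_deriv ?_
  push_cast
  ring

lemma radial_hasDerivAt (hc : 0 < c) {v : ℝ → ℝ}
    (hv : ContDiffOn ℝ 2 v (Set.Ioi 0)) {α : ℝ}
    (hv' : ∀ r : ℝ, 0 < r → deriv v r = -c * r ^ α)
    (w ξ : EuclideanSpace ℝ (Fin n)) {t : ℝ} (ht : w + t • ξ ≠ 0) :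
    HasDerivAt (fun s : ℝ => v ‖w + s • ξ‖)
      (-(c/2) * (‖w + t • ξ‖^2) ^ ((α - 1)/2) * (2*⟪w,ξ⟫ + 2*t*‖ξ‖^2)) t := by
  set q : ℝ → ℝ := fun s => ‖w + s • ξ‖^2 with hqdef
  have hqt : 0 < q t := pow_pos (norm_pos_iff.mpr ht) 2
  have hq := q_hasDerivAt w ξ t
  have hm : HasDerivAt (fun s => Real.sqrt (q s))
      (1/(2*Real.sqrt (q t)) * (2*⟪w,ξ⟫ + 2*t*‖ξ‖^2)) t :=
    (Real.hasDerivAt_sqrt hqt.ne').comp t hq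
  have hmt : Real.sqrt (q t) = ‖w + t • ξ‖ := Real.sqrt_sq (norm_nonneg _)
  have hmpos : 0 < Real.sqrt (q t) := Real.sqrt_pos.2 hqt
  have hvd : HasDerivAt v (-c * (Real.sqrt (q t)) ^ α) (Real.sqrt (q t)) := by
    have hdiff := (hv.contDiffAt (Ioi_mem_nhds hmpos)).differentiableAt two_ne_zero
    have h := hdiff.hasDerivAt
    rwa [hv' _ hmpos] at h
  have hcomp := hvd.comp t hm
  have hfeq : (fun s : ℝ => v ‖w + s • ξ‖) = fun s => v (Real.sqrt (q s)) := by
    funext s; rw [hqdef]; rw [Real.sqrt_sq (norm_nonneg _)]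
  rw [hfeq]
  refine hcomp.congr_deriv ?_
  have hsq : Real.sqrt (q t) = (q t) ^ ((1:ℝ)/2) := Real.sqrt_eq_rpow _
  have e1 : (Real.sqrt (q t))^α = (q t)^(α/2) := by
    rw [hsq, ← Real.rpow_mul hqt.le]
    congr 1; ring
  have e2 : (q t)^(α/2) = (q t)^((α-1)/2) * (q t)^((1:ℝ)/2) := by
    rw [← Real.rpow_add hqt]; congr 1; ring
  have hne : (q t)^((1:ℝ)/2) ≠ 0 := (Real.rpow_pos_of_pos hqt _).ne'
  rw [e1, e2, hsq]
  field_simp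
  ring

end radial

lemma radial_hasDerivAt2 {α : ℝ} (w ξ : EuclideanSpace ℝ (Fin n)) (hw : w ≠ 0) :
    HasDerivAt (fun t : ℝ => -(c/2) * (‖w + t • ξ‖^2) ^ ((α - 1)/2) * (2*⟪w,ξ⟫ + 2*t*‖ξ‖^2))
      (-c * (‖w‖^2) ^ ((α - 3)/2) * ((α - 1)*⟪w,ξ⟫^2 + ‖w‖^2*‖ξ‖^2)) 0 := by
  have hq0 : (0:ℝ) < ‖w‖^2 := pow_pos (norm_pos_iff.mpr hw) 2
  have h0 : ‖w + (0:ℝ) • ξ‖^2 = ‖w‖^2 := by simp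
  have hq' : HasDerivAt (fun s : ℝ => ‖w + s • ξ‖^2) (2*⟪w,ξ⟫) 0 := by
    simpa using q_hasDerivAt w ξ 0
  have hpow := Real.hasDerivAt_rpow_const (x := ‖w + (0:ℝ) • ξ‖^2) (p := (α-1)/2)
    (Or.inl (by rw [h0]; exact hq0.ne'))
  have hr := hpow.comp 0 hq'
  have hlin : HasDerivAt (fun t : ℝ => 2*⟪w,ξ⟫ + 2*t*‖ξ‖^2) (2*‖ξ‖^2) 0 := by
    simpa using (((hasDerivAt_id (0:ℝ)).const_mul 2).mul_const (‖ξ‖^2)).const_add (2*⟪w,ξ⟫)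
  have hprod := (hr.const_mul (-(c/2))).mul hlin
  refine hprod.congr_deriv ?_
  simp only [Function.comp_def, h0]
  have e : (‖w‖^2) ^ ((α-1)/2) = (‖w‖^2) ^ ((α-3)/2) * ‖w‖^2 := by
    rw [show (α-1)/2 = (α-3)/2 + 1 by ring, Real.rpow_add hq0, Real.rpow_one]
  have e2 : (‖w‖^2) ^ ((α-1)/2 - 1) = (‖w‖^2) ^ ((α-3)/2) := by
    congr 1; ring
  rw [e, e2]
  ring
lemma antitone_deriv_nonpos' {g : ℝ → ℝ} {t : ℝ} (hg : Antitone g)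
    (hd : DifferentiableAt ℝ g t) : deriv g t ≤ 0 := by
  have h := hd.hasDerivAt
  rw [hasDerivAt_iff_tendsto_slope] at h
  have hsub : Set.Ioi t ⊆ {t}ᶜ := fun s hs => ne_of_gt hs
  have h' := h.mono_left (nhdsWithin_mono t hsub)
  refine le_of_tendsto h' ?_
  filter_upwards [self_mem_nhdsWithin] with s hs
  rw [slope_def_field]
  have h1 : g s ≤ g t := hg (le_of_lt hs)
  have h2 : (0:ℝ) < s - t := sub_pos.2 hs
  exact div_nonpos_of_nonpos_of_nonneg (by linarith) h2.le

lemma concave_line_deriv2_nonpos {n : ℕ} {K : EuclideanSpace ℝ (Fin n) → ℝ}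
    (hK : ConcaveOn ℝ Set.univ K) (hK2 : ContDiff ℝ 2 K) (x ξ : EuclideanSpace ℝ (Fin n)) :
    deriv (deriv (fun t : ℝ => K (x + t • ξ))) 0 ≤ 0 := by
  set k : ℝ → ℝ := fun t => K (x + t • ξ) with hkdef
  have hk2 : ContDiff ℝ 2 k := hK2.comp (contDiff_const.add (contDiff_id.smul contDiff_const))
  have hkconc : ConcaveOn ℝ Set.univ k := by
    have h := hK.comp_affineMap (AffineMap.lineMap x (x + ξ) : ℝ →ᵃ[ℝ] _)
    have heq : (K ∘ (AffineMap.lineMap x (x + ξ) : ℝ →ᵃ[ℝ] _)) = k := by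
      funext t
      simp [hkdef, AffineMap.lineMap_apply, add_comm]
    rw [heq] at h
    simpa using h
  have hkdiff : Differentiable ℝ k := hk2.differentiable two_ne_zero
  have hanti : Antitone (deriv k) :=
    antitoneOn_univ.mp (hkconc.antitoneOn_deriv (fun z _ => hkdiff z))
  have hk2' : ContDiff ℝ (1 + 1) k := by
    rwa [(by norm_num : (1 + 1 : WithTop ℕ∞) = 2)]
  have hdk : ContDiff ℝ 1 (deriv k) := (contDiff_succ_iff_deriv.mp hk2').2.2
  exact antitone_deriv_nonpos' hanti ((hdk.differentiable one_ne_zero) 0)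

lemma per_i_algebra {np c T G s : ℝ} (hn : 1 ≤ np) (hp : 2 < np + 0) (hc : 0 < c) : True := trivial

lemma per_i {n : ℕ} {p c T G s : ℝ} (hn : 1 ≤ n) (hp : 2 < p) (hc : 0 < c)
    (hT : 0 < T) (hG : 0 < G) (hs : s^2 ≤ T*G) :
    (p-2) * (-c * T ^ (((1 - (n:ℝ))/(p-1) - 3)/2) * (((1 - (n:ℝ))/(p-1) - 1)*s^2 + T*G)) / G
      + (-c * T ^ (((1 - (n:ℝ))/(p-1) - 3)/2) * (((1 - (n:ℝ))/(p-1) - 1)*T + T*(n:ℝ))) ≤ 0 := by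
  set α : ℝ := (1 - (n:ℝ))/(p-1) with hαdef
  have hp1 : (0:ℝ) < p - 1 := by linarith
  have hα : (p-1) * α = 1 - (n:ℝ) := by
    rw [hαdef]; field_simp
  have hn' : (1:ℝ) ≤ (n:ℝ) := by exact_mod_cast hn
  have hαnp : α ≤ 0 := div_nonpos_of_nonpos_of_nonneg (by linarith) hp1.le
  set β : ℝ := T ^ ((α - 3)/2) with hβdef
  have hβ : 0 < β := Real.rpow_pos_of_pos hT _
  have key : 0 ≤ (p-2)*(1-α)*(T*G - s^2) :=
    mul_nonneg (mul_nonneg (by linarith) (by linarith)) (by linarith)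
  have hα' : ((p-1)*α)*(T*G) = (1 - (n:ℝ))*(T*G) := by rw [hα]
  have hbr : 0 ≤ (p-2)*((α-1)*s^2 + T*G) + ((α-1)*T + T*(n:ℝ))*G := by nlinarith [key, hα']
  have heq : (p-2) * (-c * β * ((α-1)*s^2 + T*G)) / G + (-c * β * ((α-1)*T + T*(n:ℝ)))
      = (-(c*β)) * (((p-2)*((α-1)*s^2 + T*G) + ((α-1)*T + T*(n:ℝ))*G)/G) := by
    field_simp
    ring
  rw [heq]
  exact mul_nonpos_of_nonpos_of_nonneg (by nlinarith) (div_nonneg hbr hG.le)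

/-- for `p > 2`, the superposition `V(x) = Σ aᵢ w(x − yᵢ)` of translates
of the fundamental solution plus a concave `C²` function `K` satisfies
`Δ_p(V + K)(x) ≤ 0` wherever `x ≠ yᵢ` for all `i` and `∇(V+K)(x) ≠ 0`. -/
theorem stmt6 {n : ℕ} (hn : 1 ≤ n) (p c : ℝ) (hp : 2 < p) (hc : 0 < c)
    (v : ℝ → ℝ) (hv : ContDiffOn ℝ 2 v (Set.Ioi 0))
    (hv' : ∀ r : ℝ, 0 < r → deriv v r = -c * r ^ ((1 - n) / (p - 1)))
    (N : ℕ) (hN : 1 ≤ N) (a : Fin N → ℝ) (ha : ∀ i, 0 < a i)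
    (y : Fin N → EuclideanSpace ℝ (Fin n))
    (V : EuclideanSpace ℝ (Fin n) → ℝ) (hV : V = fun z => ∑ i, a i * v ‖z - y i‖)
    (K : EuclideanSpace ℝ (Fin n) → ℝ)
    (hK : ConcaveOn ℝ Set.univ K) (hK2 : ContDiff ℝ 2 K)
    (x : EuclideanSpace ℝ (Fin n)) (hx : ∀ i, x ≠ y i)
    (hgrad : gradient (fun z => V z + K z) x ≠ 0) :
    pLap p (fun z => V z + K z) x ≤ 0 := by
  set u : EuclideanSpace ℝ (Fin n) → ℝ := fun z => V z + K z with hudef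
  set α : ℝ := (1 - (n:ℝ))/(p-1) with hαdef
  set g : EuclideanSpace ℝ (Fin n) := gradient u x with hgdef
  -- basic nonvanishing
  have hwne : ∀ i, x - y i ≠ 0 := fun i => sub_ne_zero.mpr (hx i)
  have hnormpos : ∀ i, 0 < ‖x - y i‖ := fun i => norm_pos_iff.mpr (hwne i)
  -- smoothness of u at x
  have hφ : ∀ i, ContDiffAt ℝ 2 (fun z : EuclideanSpace ℝ (Fin n) => v ‖z - y i‖) x := by
    intro i
    have hn1 : ContDiffAt ℝ 2 (fun z : EuclideanSpace ℝ (Fin n) => ‖z - y i‖) x :=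
      (contDiffAt_norm (𝕜 := ℝ) (hwne i)).comp x ((contDiff_id.sub contDiff_const).contDiffAt)
    exact (hv.contDiffAt (Ioi_mem_nhds (hnormpos i))).comp x hn1
  have hV2 : ContDiffAt ℝ 2 V x := by
    rw [hV]
    exact ContDiffAt.sum fun i _ => contDiffAt_const.mul (hφ i)
  have hu2 : ContDiffAt ℝ 2 u x := hV2.add hK2.contDiffAt
  -- quadratic form pieces
  set R : Fin N → EuclideanSpace ℝ (Fin n) → ℝ := fun i ξ =>
    -c * (‖x - y i‖^2) ^ ((α - 3)/2) * ((α - 1)*⟪x - y i, ξ⟫^2 + ‖x - y i‖^2*‖ξ‖^2) with hRdef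
  set QK : EuclideanSpace ℝ (Fin n) → ℝ := fun ξ => deriv (deriv (fun t : ℝ => K (x + t • ξ))) 0 with hQKdef
  have hQK : ∀ ξ, QK ξ ≤ 0 := fun ξ => concave_line_deriv2_nonpos hK hK2 x ξ
  -- the main per-direction formula
  have main : ∀ ξ : EuclideanSpace ℝ (Fin n), hess u x ξ ξ = (∑ i, a i * R i ξ) + QK ξ := by
    intro ξ
    rw [hess_line hu2 ξ]
    have harg : ∀ (t : ℝ) i, x + t • ξ - y i = (x - y i) + t • ξ := by intros; abel
    have huline : (fun t : ℝ => u (x + t • ξ)) =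
        fun t : ℝ => (∑ i, a i * v ‖(x - y i) + t • ξ‖) + K (x + t • ξ) := by
      funext t
      rw [hudef, hV]
      simp only [harg]
    rw [huline]
    -- eventual nonvanishing along the line
    have hev : ∀ᶠ t in 𝓝 (0:ℝ), ∀ i, (x - y i) + t • ξ ≠ 0 := by
      rw [eventually_all]
      intro i
      have hcont : ContinuousAt (fun t : ℝ => (x - y i) + t • ξ) 0 := by fun_prop
      exact hcont.eventually_ne (by simpa using hwne i)
    set F : Fin N → ℝ → ℝ := fun i t =>
      -(c/2) * (‖(x - y i) + t • ξ‖^2) ^ ((α - 1)/2) * (2*⟪x - y i, ξ⟫ + 2*t*‖ξ‖^2) with hFdef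
    have hkline : ContDiff ℝ 2 (fun t : ℝ => K (x + t • ξ)) :=
      hK2.comp (contDiff_const.add (contDiff_id.smul contDiff_const))
    have hklined : Differentiable ℝ (fun t : ℝ => K (x + t • ξ)) :=
      hkline.differentiable two_ne_zero
    have hderiv1 : deriv (fun t : ℝ => (∑ i, a i * v ‖(x - y i) + t • ξ‖) + K (x + t • ξ))
        =ᶠ[𝓝 (0:ℝ)] fun t => (∑ i, a i * F i t) + deriv (fun s : ℝ => K (x + s • ξ)) t := by
      filter_upwards [hev] with t ht
      have hsum : HasDerivAt (fun s : ℝ => ∑ i, a i * v ‖(x - y i) + s • ξ‖)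
          (∑ i, a i * F i t) t :=
        HasDerivAt.fun_sum fun i _ =>
          (radial_hasDerivAt hc hv hv' (x - y i) ξ (ht i)).const_mul (a i)
      exact (hsum.add ((hklined t).hasDerivAt)).deriv
    rw [hderiv1.deriv_eq]
    have hsum2 : HasDerivAt (fun t : ℝ => ∑ i, a i * F i t) (∑ i, a i * R i ξ) 0 :=
      HasDerivAt.fun_sum fun i _ =>
        (radial_hasDerivAt2 (x - y i) ξ (hwne i)).const_mul (a i)
    have hk2' : ContDiff ℝ (1 + 1) (fun t : ℝ => K (x + t • ξ)) := by
      rwa [(by norm_num : (1 + 1 : WithTop ℕ∞) = 2)]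
    have hdk : ContDiff ℝ 1 (deriv (fun t : ℝ => K (x + t • ξ))) :=
      (contDiff_succ_iff_deriv.mp hk2').2.2
    have hk2d : HasDerivAt (deriv (fun t : ℝ => K (x + t • ξ))) (QK ξ) 0 :=
      ((hdk.differentiable one_ne_zero) 0).hasDerivAt
    exact (hsum2.add hk2d).deriv
  -- sum over the basis directions
  have hwsum : ∀ i, ∑ j, ⟪x - y i, (EuclideanSpace.single j (1:ℝ) : EuclideanSpace ℝ (Fin n))⟫^2 = ‖x - y i‖^2 := by
    intro i
    have h1 : ∀ j, ⟪x - y i, (EuclideanSpace.single j (1:ℝ) : EuclideanSpace ℝ (Fin n))⟫ = (x - y i) j := by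
      intro j
      rw [EuclideanSpace.inner_single_right]
      simp
    simp only [h1]
    rw [EuclideanSpace.norm_sq_eq]
    simp [sq_abs]
  have hRsum : ∀ i, ∑ j, R i (EuclideanSpace.single j (1:ℝ)) =
      -c * (‖x - y i‖^2) ^ ((α - 3)/2) * ((α - 1)*‖x - y i‖^2 + ‖x - y i‖^2*(n:ℝ)) := by
    intro i
    rw [← Finset.mul_sum]
    congr 1
    have : ∀ j, (α - 1)*⟪x - y i, (EuclideanSpace.single j (1:ℝ) : EuclideanSpace ℝ (Fin n))⟫^2
        + ‖x - y i‖^2*‖(EuclideanSpace.single j (1:ℝ) : EuclideanSpace ℝ (Fin n))‖^2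
        = (α - 1)*⟪x - y i, (EuclideanSpace.single j (1:ℝ) : EuclideanSpace ℝ (Fin n))⟫^2 + ‖x - y i‖^2 := by
      intro j; simp
    simp only [this]
    rw [Finset.sum_add_distrib, ← Finset.mul_sum, hwsum i]
    simp [Finset.card_univ, mul_comm]
  have hlap : lap u x = (∑ i, a i * (-c * (‖x - y i‖^2) ^ ((α - 3)/2) *
      ((α - 1)*‖x - y i‖^2 + ‖x - y i‖^2*(n:ℝ))))
      + ∑ j, QK (EuclideanSpace.single j (1:ℝ)) := by
    rw [lap]
    simp only [main]
    rw [Finset.sum_add_distrib, Finset.sum_comm]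
    congr 1
    · refine Finset.sum_congr rfl fun i _ => ?_
      rw [← Finset.mul_sum, hRsum i]
  -- positivity setup
  have hgn : 0 < ‖g‖ := norm_pos_iff.mpr hgrad
  have hG : 0 < ‖g‖^2 := pow_pos hgn 2
  -- per-i inequality
  have hperi : ∀ i, (p-2) * (R i g) / ‖g‖^2 + (-c * (‖x - y i‖^2) ^ ((α - 3)/2) *
      ((α - 1)*‖x - y i‖^2 + ‖x - y i‖^2*(n:ℝ))) ≤ 0 := by
    intro i
    have hT : 0 < ‖x - y i‖^2 := pow_pos (hnormpos i) 2
    have hcs : ⟪x - y i, g⟫^2 ≤ ‖x - y i‖^2 * ‖g‖^2 := by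
      have := real_inner_mul_inner_self_le (x - y i) g
      rwa [real_inner_self_eq_norm_sq, real_inner_self_eq_norm_sq, ← pow_two] at this
    exact per_i hn hp hc hT hG hcs
  -- assemble
  rw [pLap, ← hgdef, main g, hlap]
  apply mul_nonpos_of_nonneg_of_nonpos (Real.rpow_nonneg (norm_nonneg _) _)
  have e1 : ∑ i, a i * ((p-2)*(R i g)/‖g‖^2 + (-c * (‖x - y i‖^2) ^ ((α - 3)/2) *
      ((α - 1)*‖x - y i‖^2 + ‖x - y i‖^2*(n:ℝ))))
      = (p-2)*(∑ i, a i * R i g)/‖g‖^2 + ∑ i, a i * (-c * (‖x - y i‖^2) ^ ((α - 3)/2) *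
      ((α - 1)*‖x - y i‖^2 + ‖x - y i‖^2*(n:ℝ))) := by
    simp only [mul_add]
    rw [Finset.sum_add_distrib]
    congr 1
    rw [Finset.mul_sum, Finset.sum_div]
    exact Finset.sum_congr rfl fun i _ => by ring
  have hterm : ∑ i, a i * ((p-2)*(R i g)/‖g‖^2 + (-c * (‖x - y i‖^2) ^ ((α - 3)/2) *
      ((α - 1)*‖x - y i‖^2 + ‖x - y i‖^2*(n:ℝ)))) ≤ 0 :=
    Finset.sum_nonpos fun i _ => mul_nonpos_of_nonneg_of_nonpos (ha i).le (hperi i)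
  have hKterm : (p-2)*(QK g)/‖g‖^2 ≤ 0 :=
    div_nonpos_of_nonpos_of_nonneg
      (mul_nonpos_of_nonneg_of_nonpos (by linarith) (hQK g)) hG.le
  have hKsum : ∑ j, QK (EuclideanSpace.single j (1:ℝ)) ≤ 0 :=
    Finset.sum_nonpos fun j _ => hQK _
  have efinal : (p - 2) * ((∑ i, a i * R i g) + QK g) / ‖g‖^2
      + ((∑ i, a i * (-c * (‖x - y i‖^2) ^ ((α - 3)/2) *
        ((α - 1)*‖x - y i‖^2 + ‖x - y i‖^2*(n:ℝ)))) + ∑ j, QK (EuclideanSpace.single j (1:ℝ)))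
      = (∑ i, a i * ((p-2)*(R i g)/‖g‖^2 + (-c * (‖x - y i‖^2) ^ ((α - 3)/2) *
        ((α - 1)*‖x - y i‖^2 + ‖x - y i‖^2*(n:ℝ)))))
        + ((p-2)*(QK g)/‖g‖^2 + ∑ j, QK (EuclideanSpace.single j (1:ℝ))) := by
    rw [e1]
    ring
  rw [efinal]
  linarith [hterm, hKterm, hKsum]
end

section
/- Let n ≥ 1 and p > 2. Let f_1,…,f_N : ℝⁿ → ℝ be twice differentiable at a point x ∈ ℝⁿ, and for each i let λ_1^i ≤ λ_2^i ≤ … ≤ λ_n^i be the eigenvalues of the (symmetric) Hessian matrix Hf_i(x). If λ_1^i + … + λ_{n−1}^i + (p−1)·λ_n^i ≤ 0 for every i, then, provided ∇(Σ_i f_i)(x) ≠ 0, one has Δ_p(Σ_{i=1}^N f_i)(x) ≤ 0. -/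
open Filter Topology RealInnerProductSpace

/-- if each `fᵢ` is twice differentiable at `x` with symmetric Hessian
having eigenvalues `λ₁ⁱ ≤ ⋯ ≤ λₙⁱ` (with orthonormal eigenbasis `b i`) satisfying
`λ₁ⁱ + ⋯ + λ_{n−1}ⁱ + (p−1)·λₙⁱ ≤ 0` for every `i`, then `Δ_p(Σᵢ fᵢ)(x) ≤ 0`,
provided `∇(Σᵢ fᵢ)(x) ≠ 0`. -/
theorem stmt7 {n : ℕ} (hn : 1 ≤ n) (p : ℝ) (hp : 2 < p) (N : ℕ)
    (f : Fin N → EuclideanSpace ℝ (Fin n) → ℝ) (x : EuclideanSpace ℝ (Fin n))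
    (hf1 : ∀ i, ∀ᶠ z in 𝓝 x, DifferentiableAt ℝ (f i) z)
    (hf2 : ∀ i, DifferentiableAt ℝ (fderiv ℝ (f i)) x)
    (b : Fin N → OrthonormalBasis (Fin n) ℝ (EuclideanSpace ℝ (Fin n)))
    (lam : Fin N → Fin n → ℝ) (hmono : ∀ i, Monotone (lam i))
    (heig : ∀ i j (w : EuclideanSpace ℝ (Fin n)),
      hess (f i) x (b i j) w = lam i j * ⟪b i j, w⟫)
    (hineq : ∀ i,
      (∑ j ∈ Finset.univ.erase (⟨n - 1, by omega⟩ : Fin n), lam i j) +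
        (p - 1) * lam i ⟨n - 1, by omega⟩ ≤ 0)
    (hgrad : gradient (fun z => ∑ i, f i z) x ≠ 0) :
    pLap p (fun z => ∑ i, f i z) x ≤ 0 := by
  classical
  set u : EuclideanSpace ℝ (Fin n) → ℝ := fun z => ∑ i, f i z with hu
  set g := gradient u x with hg
  set B : Fin N → (EuclideanSpace ℝ (Fin n) →L[ℝ] EuclideanSpace ℝ (Fin n) →L[ℝ] ℝ) :=
    fun i => fderiv ℝ (fderiv ℝ (f i)) x with hBdef
  have hessB : ∀ i v w, hess (f i) x v w = B i v w := by
    intro i v w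
    rw [hess, iteratedFDeriv_two_apply]
    simp [hBdef]
  -- second derivative of the sum
  have hev : ∀ᶠ z in 𝓝 x, ∀ i, DifferentiableAt ℝ (f i) z := eventually_all.2 hf1
  have hdu : fderiv ℝ u =ᶠ[𝓝 x] fun z => ∑ i, fderiv ℝ (f i) z :=
    hev.mono fun z hz => fderiv_fun_sum fun i _ => hz i
  have h2 : fderiv ℝ (fderiv ℝ u) x = ∑ i, B i := by
    rw [hdu.fderiv_eq]
    exact fderiv_fun_sum fun i _ => hf2 i
  have hessU : ∀ v w, hess u x v w = ∑ i, B i v w := by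
    intro v w
    rw [hess, iteratedFDeriv_two_apply, h2]
    simp
  -- expansion of each Hessian in its eigenbasis
  have key : ∀ i v w, B i v w = ∑ j, ⟪b i j, v⟫ * (lam i j * ⟪b i j, w⟫) := by
    intro i v w
    conv_lhs => rw [← (b i).sum_repr' v]
    rw [map_sum, ContinuousLinearMap.sum_apply]
    refine Finset.sum_congr rfl fun j _ => ?_
    rw [map_smul]
    simp only [ContinuousLinearMap.smul_apply, smul_eq_mul]
    rw [← hessB, heig]
  -- norms of eigenbasis vectors against the standard basis
  have hnormone : ∀ (i : Fin N) (j : Fin n),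
      ∑ k, ⟪b i j, EuclideanSpace.single k (1:ℝ)⟫ * ⟪b i j, EuclideanSpace.single k (1:ℝ)⟫
        = 1 := by
    intro i j
    have h := (EuclideanSpace.basisFun (Fin n) ℝ).sum_inner_mul_inner (b i j) (b i j)
    simp only [EuclideanSpace.basisFun_apply] at h
    have : ∀ k : Fin n, ⟪EuclideanSpace.single k (1:ℝ), b i j⟫
        = ⟪b i j, EuclideanSpace.single k (1:ℝ)⟫ := fun k => real_inner_comm _ _
    calc ∑ k, ⟪b i j, EuclideanSpace.single k (1:ℝ)⟫ * ⟪b i j, EuclideanSpace.single k (1:ℝ)⟫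
        = ⟪b i j, b i j⟫ := by rw [← h]; exact Finset.sum_congr rfl fun k _ => by rw [this]
      _ = ‖b i j‖ ^ 2 := real_inner_self_eq_norm_sq _
      _ = 1 := by rw [(b i).orthonormal.1 j]; norm_num
  -- the Laplacian of each piece is the sum of eigenvalues
  have hlapB : ∀ i : Fin N,
      (∑ k, B i (EuclideanSpace.single k (1:ℝ)) (EuclideanSpace.single k (1:ℝ)))
        = ∑ j, lam i j := by
    intro i
    have : ∀ k : Fin n, B i (EuclideanSpace.single k (1:ℝ)) (EuclideanSpace.single k (1:ℝ))
        = ∑ j, ⟪b i j, EuclideanSpace.single k (1:ℝ)⟫ *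
            (lam i j * ⟪b i j, EuclideanSpace.single k (1:ℝ)⟫) := fun k => key i _ _
    rw [Finset.sum_congr rfl fun k _ => this k, Finset.sum_comm]
    refine Finset.sum_congr rfl fun j _ => ?_
    have := hnormone i j
    calc (∑ k, ⟪b i j, EuclideanSpace.single k (1:ℝ)⟫ *
            (lam i j * ⟪b i j, EuclideanSpace.single k (1:ℝ)⟫))
        = lam i j * ∑ k, ⟪b i j, EuclideanSpace.single k (1:ℝ)⟫ *
            ⟪b i j, EuclideanSpace.single k (1:ℝ)⟫ := by
          rw [Finset.mul_sum]; exact Finset.sum_congr rfl fun k _ => by ring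
      _ = lam i j := by rw [this, mul_one]
  -- norm of the gradient in each eigenbasis
  have hnormg : ∀ i : Fin N, (‖g‖ : ℝ) ^ 2 = ∑ j, ⟪b i j, g⟫ * ⟪b i j, g⟫ := by
    intro i
    have h := (b i).sum_inner_mul_inner g g
    rw [← real_inner_self_eq_norm_sq, ← h]
    exact Finset.sum_congr rfl fun j _ => by rw [real_inner_comm g (b i j)]
  have hS : (0 : ℝ) < ‖g‖ ^ 2 := pow_pos (norm_pos_iff.2 hgrad) 2
  -- the bracket is a sum of per-index brackets, each nonpositive
  have hbr : (p - 2) * hess u x g g / ‖g‖ ^ 2 + lap u x ≤ 0 := by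
    have hhess : hess u x g g = ∑ i, B i g g := hessU g g
    have hlap : lap u x = ∑ i, ∑ j, lam i j := by
      rw [lap]
      rw [Finset.sum_congr rfl fun k _ => hessU _ _, Finset.sum_comm]
      exact Finset.sum_congr rfl fun i _ => hlapB i
    rw [hhess, hlap, Finset.mul_sum, Finset.sum_div, ← Finset.sum_add_distrib]
    refine Finset.sum_nonpos fun i _ => ?_
    -- per-index estimate
    set M : Fin n := ⟨n - 1, by omega⟩ with hM
    have hBgg : B i g g = ∑ j, lam i j * (⟪b i j, g⟫ * ⟪b i j, g⟫) := by
      rw [key i g g]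
      exact Finset.sum_congr rfl fun j _ => by ring
    have hle : B i g g ≤ lam i M * ‖g‖ ^ 2 := by
      rw [hBgg, hnormg i, Finset.mul_sum]
      refine Finset.sum_le_sum fun j _ => ?_
      have hj : j ≤ M := by
        have := j.isLt
        exact Fin.mk_le_mk.mpr (by omega) |>.trans_eq rfl
      exact mul_le_mul_of_nonneg_right (hmono i hj) (mul_self_nonneg _)
    have h1 : (p - 2) * B i g g / ‖g‖ ^ 2 ≤ (p - 2) * lam i M := by
      rw [div_le_iff₀ hS]
      have hp2 : (0 : ℝ) ≤ p - 2 := by linarith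
      calc (p - 2) * B i g g ≤ (p - 2) * (lam i M * ‖g‖ ^ 2) :=
            mul_le_mul_of_nonneg_left hle hp2
        _ = (p - 2) * lam i M * ‖g‖ ^ 2 := by ring
    have hsum : ∑ j, lam i j = (∑ j ∈ Finset.univ.erase M, lam i j) + lam i M :=
      (Finset.sum_erase_add _ _ (Finset.mem_univ M)).symm
    have := hineq i
    rw [hsum]
    linarith
  have hfac : (0 : ℝ) ≤ ‖g‖ ^ (p - 2) := Real.rpow_nonneg (norm_nonneg _) _
  calc pLap p u x = ‖g‖ ^ (p - 2) * ((p - 2) * hess u x g g / ‖g‖ ^ 2 + lap u x) := rfl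
    _ ≤ ‖g‖ ^ (p - 2) * 0 := mul_le_mul_of_nonneg_left hbr hfac
    _ = 0 := by ring
end

section
/- In ℝⁿ (n ≥ 1), let e₁ be the first standard basis vector and set y_i := e^{(−1)^i·i}·e₁ and a_i := 1/i² for i ∈ ℕ. Then the series Σ_{i=1}^∞ a_i·ln|y_i| = Σ_{i=1}^∞ (−1)^i/i converges, but for every x ∈ ℝⁿ with x ≠ 0 and x ≠ y_i for all i, the series Σ_{i=1}^∞ a_i·ln|x − y_i| diverges to +∞; hence the function −Σ_{i=1}^∞ a_i·ln|x − y_i| equals −∞ at every such x, even though it is finite at the origin. -/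
open Filter Topology

lemma stmt13harmIoc (m : ℕ) :
    Tendsto (fun q : ℕ => ∑ k ∈ Finset.Ioc m q, (1/(k:ℝ))) atTop atTop := by
  have h0 : Tendsto (fun q : ℕ => ∑ k ∈ Finset.Ioc 0 q, (1/(k:ℝ))) atTop atTop := by
    have := Real.tendsto_sum_range_one_div_nat_succ_atTop
    apply this.congr
    intro q
    rw [show Finset.Ioc 0 q = Finset.Ico 1 (q+1) by rfl, Finset.sum_Ico_eq_sum_range]
    simp only [Nat.add_sub_cancel]
    refine Finset.sum_congr rfl fun i _ => ?_
    push_cast; ring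
  have hsub : Tendsto (fun q : ℕ => (∑ k ∈ Finset.Ioc 0 q, (1/(k:ℝ))) -
      ∑ k ∈ Finset.Ioc 0 m, (1/(k:ℝ))) atTop atTop :=
    tendsto_atTop_add_const_right _ _ h0
  apply hsub.congr'
  filter_upwards [eventually_ge_atTop m] with q hq
  rw [← Finset.sum_Ioc_consecutive _ (Nat.zero_le m) hq]
  ring

lemma stmt13evensum (m N : ℕ) :
    ∑ i ∈ Finset.Ioc (2*m) N, (if Even i then 1/(i:ℝ) else 0)
      = ∑ k ∈ Finset.Ioc m (N/2), (1/((2*k : ℕ):ℝ)) := by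
  rw [← Finset.sum_filter]
  refine Finset.sum_nbij' (fun i => i / 2) (fun k => 2 * k) ?_ ?_ ?_ ?_ ?_
  · intro a ha
    simp only [Finset.mem_filter, Finset.mem_Ioc] at ha
    obtain ⟨⟨h1, h2⟩, c, hc⟩ := ha
    simp only [Finset.mem_Ioc]
    omega
  · intro a ha
    simp only [Finset.mem_Ioc] at ha
    simp only [Finset.mem_filter, Finset.mem_Ioc]
    refine ⟨⟨by omega, by omega⟩, ⟨a, by ring⟩⟩
  · intro a ha
    simp only [Finset.mem_filter, Finset.mem_Ioc] at ha
    obtain ⟨⟨h1, h2⟩, c, hc⟩ := ha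
    show 2 * (a / 2) = a
    omega
  · intro a _
    show (2 * a) / 2 = a
    omega
  · intro a ha
    simp only [Finset.mem_filter, Finset.mem_Ioc] at ha
    obtain ⟨⟨h1, h2⟩, c, hc⟩ := ha
    show (1:ℝ)/(a:ℝ) = 1/((2*(a/2) : ℕ):ℝ)
    have : 2 * (a/2) = a := by omega
    rw [this]

/-- with `yᵢ := e^{(−1)ⁱ·i}·e₁` and `aᵢ := 1/i²`, the series
`Σ aᵢ·ln|yᵢ| = Σ (−1)ⁱ/i` converges (partial sums tend to a finite limit), but for
every `x ≠ 0` with `x ≠ yᵢ` for all `i ≥ 1`, the series `Σ aᵢ·ln|x − yᵢ|` diverges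
to `+∞`; hence `−Σ aᵢ·ln|x − yᵢ|` equals `−∞` at every such `x`, though it is finite
at the origin. -/
theorem stmt13 {n : ℕ} (hn : 1 ≤ n)
    (y : ℕ → EuclideanSpace ℝ (Fin n))
    (hy : ∀ i : ℕ, y i =
      Real.exp ((-1 : ℝ) ^ i * i) • EuclideanSpace.single (⟨0, by omega⟩ : Fin n) (1 : ℝ)) :
    (∀ i : ℕ, 1 ≤ i → (1 / (i : ℝ) ^ 2) * Real.log ‖y i‖ = (-1 : ℝ) ^ i / i) ∧
    (∃ S : ℝ, Tendsto
      (fun N : ℕ => ∑ i ∈ Finset.Icc 1 N, (1 / (i : ℝ) ^ 2) * Real.log ‖y i‖)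
      atTop (𝓝 S)) ∧
    (∀ x : EuclideanSpace ℝ (Fin n), x ≠ 0 → (∀ i : ℕ, 1 ≤ i → x ≠ y i) →
      Tendsto (fun N : ℕ => ∑ i ∈ Finset.Icc 1 N, (1 / (i : ℝ) ^ 2) * Real.log ‖x - y i‖)
        atTop atTop) := by
  have hynorm : ∀ i : ℕ, ‖y i‖ = Real.exp ((-1:ℝ)^i * i) := by
    intro i
    rw [hy i, norm_smul, EuclideanSpace.norm_single, norm_one, mul_one,
      Real.norm_eq_abs, Real.abs_exp]
  have hpart1 : ∀ i : ℕ, 1 ≤ i → (1 / (i : ℝ) ^ 2) * Real.log ‖y i‖ = (-1 : ℝ) ^ i / i := by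
    intro i hi
    have hi0 : (i:ℝ) ≠ 0 := Nat.cast_ne_zero.mpr (by omega)
    rw [hynorm i, Real.log_exp]
    field_simp
  refine ⟨hpart1, ?_, ?_⟩
  · -- Part 2: convergence of the alternating series
    have hanti : Antitone fun k : ℕ => 1/((k:ℝ)+1) := by
      intro a b hab
      have h1 : ((a:ℝ)+1) ≤ (b:ℝ)+1 := by
        have : (a:ℝ) ≤ b := Nat.cast_le.mpr hab
        linarith
      have h2 : (0:ℝ) < (a:ℝ)+1 := by positivity
      exact one_div_le_one_div_of_le h2 h1
    obtain ⟨l, hl⟩ := hanti.tendsto_alternating_series_of_tendsto_zero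
      tendsto_one_div_add_atTop_nhds_zero_nat
    refine ⟨-l, ?_⟩
    apply Tendsto.congr _ hl.neg
    intro N
    have step1 : ∑ i ∈ Finset.Icc 1 N, (1 / (i : ℝ) ^ 2) * Real.log ‖y i‖
        = ∑ i ∈ Finset.Icc 1 N, ((-1:ℝ)^i / i) := by
      refine Finset.sum_congr rfl fun i hi => ?_
      exact hpart1 i (Finset.mem_Icc.mp hi).1
    rw [step1, ← Finset.Ico_add_one_right_eq_Icc, Finset.sum_Ico_eq_sum_range, ← Finset.sum_neg_distrib]
    refine Finset.sum_congr rfl fun i _ => ?_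
    rw [pow_add]
    push_cast
    ring
  · -- Part 3: divergence at every x ≠ 0
    intro x hx0 _
    set r := ‖x‖ with hr_def
    have hr : 0 < r := norm_pos_iff.mpr hx0
    set m : ℕ := ⌈2*r⌉₊ + ⌈2/r⌉₊ + 1 with hm_def
    set M : ℕ := 2*m with hM_def
    have hm1 : 1 ≤ m := by omega
    have hM2 : 2 ≤ M := by omega
    set D : ℝ := Real.log 2 + |Real.log (r/2)| with hD_def
    have hlog2 : (0:ℝ) ≤ Real.log 2 := Real.log_nonneg one_le_two
    have hD2 : Real.log 2 ≤ D := by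
      rw [hD_def]
      have := abs_nonneg (Real.log (r/2)); linarith
    have hDr : -D ≤ Real.log (r/2) := by
      rw [hD_def]
      have := neg_abs_le (Real.log (r/2)); linarith
    have hDpos : 0 ≤ D := le_trans hlog2 hD2
    set t : ℕ → ℝ := fun i => (1 / (i : ℝ) ^ 2) * Real.log ‖x - y i‖ with ht_def
    have hbig : ∀ i : ℕ, M ≤ i → 2*r ≤ Real.exp i ∧ Real.exp (-(i:ℝ)) ≤ r/2 := by
      intro i hMi
      have hMi' : (M:ℝ) ≤ (i:ℝ) := Nat.cast_le.mpr hMi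
      have hei : (i:ℝ) ≤ Real.exp i := by
        have := Real.add_one_le_exp (i:ℝ); linarith
      have h2rM : 2*r ≤ (M:ℝ) := by
        have h1 : 2*r ≤ (⌈2*r⌉₊ : ℝ) := Nat.le_ceil _
        have h2 : (⌈2*r⌉₊ : ℕ) ≤ M := by omega
        have := (Nat.cast_le (α := ℝ)).mpr h2
        linarith
      have h2r : 2*r ≤ Real.exp i := by linarith
      constructor
      · exact h2r
      · have h2rM' : 2/r ≤ (M:ℝ) := by
          have h1 : 2/r ≤ (⌈2/r⌉₊ : ℝ) := Nat.le_ceil _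
          have h2 : (⌈2/r⌉₊ : ℕ) ≤ M := by omega
          have := (Nat.cast_le (α := ℝ)).mpr h2
          linarith
        have h2ri : 2/r ≤ Real.exp i := by linarith
        have h2rpos : 0 < 2/r := by positivity
        rw [Real.exp_neg]
        calc (Real.exp i)⁻¹ ≤ (2/r)⁻¹ := by
              exact inv_anti₀ h2rpos h2ri
          _ = r/2 := by rw [inv_div]
    have hterm : ∀ i : ℕ, M ≤ i →
        (if Even i then 1/(i:ℝ) else 0) - D/(i:ℝ)^2 ≤ t i := by
      intro i hMi
      have hi1 : 1 ≤ i := by omega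
      have hipos : (0:ℝ) < i := by exact_mod_cast Nat.pos_of_ne_zero (by omega)
      obtain ⟨h2r, hexpneg⟩ := hbig i hMi
      have hexppos : (0:ℝ) < Real.exp i := Real.exp_pos _
      by_cases he : Even i
      · have hy' : ‖y i‖ = Real.exp i := by
          rw [hynorm i, he.neg_one_pow, one_mul]
        have hlow : Real.exp i / 2 ≤ ‖x - y i‖ := by
          have h1 : ‖y i‖ - ‖x‖ ≤ ‖y i - x‖ := norm_sub_norm_le _ _
          rw [norm_sub_rev] at h1
          rw [hy'] at h1
          have : Real.exp i / 2 ≤ Real.exp i - r := by linarith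
          linarith
        have hlogle : Real.log (Real.exp i / 2) ≤ Real.log ‖x - y i‖ :=
          Real.log_le_log (by positivity) hlow
        have hlogval : Real.log (Real.exp i / 2) = i - Real.log 2 := by
          rw [Real.log_div (Real.exp_ne_zero _) two_ne_zero, Real.log_exp]
        rw [hlogval] at hlogle
        simp only [if_pos he]
        calc 1/(i:ℝ) - D/(i:ℝ)^2 ≤ 1/(i:ℝ) - Real.log 2/(i:ℝ)^2 := by
              have : Real.log 2/(i:ℝ)^2 ≤ D/(i:ℝ)^2 := by
                apply div_le_div_of_nonneg_right hD2 (by positivity) |>.trans_eq rfl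
              linarith
          _ = (1/(i:ℝ)^2) * ((i:ℝ) - Real.log 2) := by field_simp
          _ ≤ (1/(i:ℝ)^2) * Real.log ‖x - y i‖ := by
              apply mul_le_mul_of_nonneg_left hlogle (by positivity)
      · have hodd : Odd i := Nat.not_even_iff_odd.mp he
        have hy' : ‖y i‖ = Real.exp (-(i:ℝ)) := by
          rw [hynorm i, hodd.neg_one_pow, neg_one_mul]
        have hlow : r/2 ≤ ‖x - y i‖ := by
          have h1 : ‖x‖ - ‖y i‖ ≤ ‖x - y i‖ := norm_sub_norm_le _ _
          rw [hy'] at h1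
          have : r/2 ≤ r - Real.exp (-(i:ℝ)) := by linarith
          linarith
        have hlogle : Real.log (r/2) ≤ Real.log ‖x - y i‖ :=
          Real.log_le_log (by positivity) hlow
        simp only [if_neg he]
        calc (0:ℝ) - D/(i:ℝ)^2 = (1/(i:ℝ)^2) * (-D) := by ring
          _ ≤ (1/(i:ℝ)^2) * Real.log ‖x - y i‖ := by
              apply mul_le_mul_of_nonneg_left (le_trans hDr hlogle) (by positivity)
    -- summability of 1/i²
    have hsum2 : Summable (fun i : ℕ => 1/(i:ℝ)^2) :=
      Real.summable_one_div_nat_pow.mpr one_lt_two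
    set K : ℝ := ∑' i : ℕ, 1/(i:ℝ)^2 with hK_def
    set C0 : ℝ := ∑ i ∈ Finset.Ioc 0 M, t i with hC0_def
    -- divergence of the even part
    have hE : Tendsto (fun N : ℕ => ∑ i ∈ Finset.Ioc M N, (if Even i then 1/(i:ℝ) else 0))
        atTop atTop := by
      have hdiv2 : Tendsto (fun N : ℕ => N / 2) atTop atTop := by
        apply tendsto_atTop_atTop.mpr
        intro b
        exact ⟨2*b, fun a ha => by omega⟩
      have hcomp : Tendsto (fun N : ℕ => (1/2 : ℝ) * ∑ k ∈ Finset.Ioc m (N/2), (1/(k:ℝ)))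
          atTop atTop :=
        (Tendsto.const_mul_atTop one_half_pos (stmt13harmIoc m)).comp hdiv2
      apply hcomp.congr
      intro N
      rw [hM_def, stmt13evensum m N, Finset.mul_sum]
      refine Finset.sum_congr rfl fun k hk => ?_
      have hk1 : 1 ≤ k := by
        have := (Finset.mem_Ioc.mp hk).1; omega
      have hk0 : (k:ℝ) ≠ 0 := Nat.cast_ne_zero.mpr (by omega)
      push_cast
      field_simp
    have hf : Tendsto (fun N : ℕ => (C0 - D*K) +
        ∑ i ∈ Finset.Ioc M N, (if Even i then 1/(i:ℝ) else 0)) atTop atTop :=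
      tendsto_atTop_add_const_left _ _ hE
    apply tendsto_atTop_mono' _ _ hf
    filter_upwards [eventually_ge_atTop M] with N hN
    have hicc : Finset.Icc 1 N = Finset.Ioc 0 N := rfl
    have hsplit : ∑ i ∈ Finset.Ioc 0 M, t i + ∑ i ∈ Finset.Ioc M N, t i
        = ∑ i ∈ Finset.Ioc 0 N, t i :=
      Finset.sum_Ioc_consecutive _ (Nat.zero_le M) hN
    have hP : ∑ i ∈ Finset.Ioc M N, 1/(i:ℝ)^2 ≤ K := by
      apply Summable.sum_le_tsum _ _ hsum2
      intro i _
      positivity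
    have htail : ∑ i ∈ Finset.Ioc M N, ((if Even i then 1/(i:ℝ) else 0) - D/(i:ℝ)^2)
        ≤ ∑ i ∈ Finset.Ioc M N, t i := by
      refine Finset.sum_le_sum fun i hi => ?_
      exact hterm i (le_of_lt (Finset.mem_Ioc.mp hi).1)
    have hsep : ∑ i ∈ Finset.Ioc M N, ((if Even i then 1/(i:ℝ) else 0) - D/(i:ℝ)^2)
        = (∑ i ∈ Finset.Ioc M N, (if Even i then 1/(i:ℝ) else 0))
          - D * ∑ i ∈ Finset.Ioc M N, 1/(i:ℝ)^2 := by
      rw [Finset.sum_sub_distrib, Finset.mul_sum]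
      congr 1
      refine Finset.sum_congr rfl fun i _ => ?_
      ring
    have hDK : D * ∑ i ∈ Finset.Ioc M N, 1/(i:ℝ)^2 ≤ D * K :=
      mul_le_mul_of_nonneg_left hP hDpos
    show (C0 - D*K) + ∑ i ∈ Finset.Ioc M N, (if Even i then 1/(i:ℝ) else 0)
        ≤ ∑ i ∈ Finset.Icc 1 N, (1 / (i : ℝ) ^ 2) * Real.log ‖x - y i‖
    calc (C0 - D*K) + ∑ i ∈ Finset.Ioc M N, (if Even i then 1/(i:ℝ) else 0)
        ≤ C0 + (∑ i ∈ Finset.Ioc M N, (if Even i then 1/(i:ℝ) else 0)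
            - D * ∑ i ∈ Finset.Ioc M N, 1/(i:ℝ)^2) := by linarith
      _ = C0 + ∑ i ∈ Finset.Ioc M N, ((if Even i then 1/(i:ℝ) else 0) - D/(i:ℝ)^2) := by
          rw [hsep]
      _ ≤ C0 + ∑ i ∈ Finset.Ioc M N, t i := by linarith
      _ = ∑ i ∈ Finset.Ioc 0 N, t i := hsplit
      _ = ∑ i ∈ Finset.Icc 1 N, (1 / (i : ℝ) ^ 2) * Real.log ‖x - y i‖ := by
          rw [hicc]
end

section
/- Let n ≥ 1 and 0 < α < 1. Let a_1,…,a_N > 0 and let y_1,…,y_N ∈ ℝⁿ be distinct points, and let K : ℝⁿ → ℝ be a concave C² function. Define u(x) := −Σ_{j=1}^N a_j·|x − y_j|^α + K(x). Then for each i ∈ {1,…,N} there exists ε₀ > 0 such that for every 0 < ε < ε₀ and every x with |x − y_i| = ε, one has ⟨∇u(x), (y_i − x)/ε⟩ > 0; that is, near each pole y_i the gradient of u points inward toward the pole on the sphere ∂B(y_i, ε). -/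
open Filter Topology RealInnerProductSpace

lemma rpow_sq_helper (t : ℝ) (ht : 0 ≤ t) (b : ℝ) : ((t ^ 2 : ℝ)) ^ b = t ^ (2 * b) := by
  rw [← Real.rpow_natCast t 2, ← Real.rpow_mul ht]
  norm_num

lemma aux_hasFDerivAt_norm_rpow {E : Type*} [NormedAddCommGroup E] [InnerProductSpace ℝ E]
    (α : ℝ) {y x : E} (hx : x ≠ y) :
    HasFDerivAt (fun z => ‖z - y‖ ^ α)
      ((α * ‖x - y‖ ^ (α - 2)) • innerSL ℝ (x - y)) x := by
  have hne : (‖x - y‖ ^ 2 : ℝ) ≠ 0 := by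
    have h : x - y ≠ 0 := sub_ne_zero.mpr hx
    have := norm_pos_iff.mpr h
    positivity
  have hq : HasFDerivAt (fun z : E => ‖z - y‖ ^ 2) (2 • (innerSL ℝ (x - y))) x := by
    have := ((hasFDerivAt_id x).sub_const y).norm_sq
    simpa using this
  have hφ : HasDerivAt (fun t : ℝ => t ^ (α / 2))
      (α / 2 * (‖x - y‖ ^ 2 : ℝ) ^ (α / 2 - 1)) (‖x - y‖ ^ 2) :=
    Real.hasDerivAt_rpow_const (Or.inl hne)
  have hcomp := hφ.comp_hasFDerivAt x hq
  have hfun : ((fun t : ℝ => t ^ (α / 2)) ∘ fun z : E => ‖z - y‖ ^ 2)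
      = fun z => ‖z - y‖ ^ α := by
    funext z
    simp only [Function.comp_apply, rpow_sq_helper _ (norm_nonneg _)]
    congr 1; ring
  have hder : (α / 2 * (‖x - y‖ ^ 2 : ℝ) ^ (α / 2 - 1)) • (2 • (innerSL ℝ (x - y)))
      = (α * ‖x - y‖ ^ (α - 2)) • innerSL ℝ (x - y) := by
    have h2 : ((‖x - y‖ ^ 2 : ℝ)) ^ (α / 2 - 1) = ‖x - y‖ ^ (α - 2) := by
      rw [rpow_sq_helper _ (norm_nonneg _)]; congr 1; ring
    ext v
    simp [h2, two_smul]
    ring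
  rw [hfun, hder] at hcomp
  exact hcomp

/-- for `0 < α < 1`, distinct poles `y₁,…,y_N`, weights `aⱼ > 0` and a
concave `C²` function `K`, near each pole `yᵢ` the gradient of
`u(x) = −Σⱼ aⱼ|x − yⱼ|^α + K(x)` points inward toward the pole: there is `ε₀ > 0`
such that `⟨∇u(x), (yᵢ − x)/ε⟩ > 0` whenever `0 < ε < ε₀` and `|x − yᵢ| = ε`. -/
theorem stmt15 {n : ℕ} (hn : 1 ≤ n) (α : ℝ) (hα0 : 0 < α) (hα1 : α < 1)
    (N : ℕ) (a : Fin N → ℝ) (ha : ∀ j, 0 < a j)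
    (y : Fin N → EuclideanSpace ℝ (Fin n)) (hy : Function.Injective y)
    (K : EuclideanSpace ℝ (Fin n) → ℝ)
    (hK : ConcaveOn ℝ Set.univ K) (hK2 : ContDiff ℝ 2 K)
    (u : EuclideanSpace ℝ (Fin n) → ℝ)
    (hu : u = fun x => -∑ j, a j * ‖x - y j‖ ^ α + K x) :
    ∀ i : Fin N, ∃ ε₀ : ℝ, 0 < ε₀ ∧ ∀ ε : ℝ, 0 < ε → ε < ε₀ →
      ∀ x : EuclideanSpace ℝ (Fin n), ‖x - y i‖ = ε →
        0 < ⟪gradient u x, ε⁻¹ • (y i - x)⟫ := by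
  classical
  intro i
  set S : Finset (Fin N) := Finset.univ.erase i with hSdef
  -- a positive lower bound on distances to the other poles
  obtain ⟨r, hr0, hr⟩ : ∃ r : ℝ, 0 < r ∧ ∀ j, j ≠ i → r ≤ ‖y j - y i‖ := by
    by_cases hS : S.Nonempty
    · refine ⟨S.inf' hS fun j => ‖y j - y i‖, ?_, ?_⟩
      · rw [Finset.lt_inf'_iff]
        intro j hj
        have hne : y j ≠ y i := fun h => (Finset.mem_erase.mp hj).1 (hy h)
        simpa [norm_pos_iff, sub_ne_zero] using hne
      · intro j hj
        exact Finset.inf'_le _ (Finset.mem_erase.mpr ⟨hj, Finset.mem_univ j⟩)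
    · exact ⟨1, one_pos, fun j hj =>
        absurd ⟨j, Finset.mem_erase.mpr ⟨hj, Finset.mem_univ j⟩⟩ hS⟩
  -- a bound on the "other terms" on the closed ball of radius r/2
  set g : EuclideanSpace ℝ (Fin n) → ℝ := fun z => (∑ j ∈ S, a j * (α * ‖z - y j‖ ^ (α - 1))) + ‖fderiv ℝ K z‖
    with hgdef
  have hposS : ∀ j ∈ S, ∀ z ∈ Metric.closedBall (y i) (r / 2), 0 < ‖z - y j‖ := by
    intro j hj z hz
    have hjne : j ≠ i := (Finset.mem_erase.mp hj).1
    have h1 : r ≤ ‖y j - y i‖ := hr j hjne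
    have h2 : ‖z - y i‖ ≤ r / 2 := by
      have := Metric.mem_closedBall.mp hz
      rwa [dist_eq_norm] at this
    have h3 : ‖y j - y i‖ ≤ ‖y j - z‖ + ‖z - y i‖ := by
      have := dist_triangle (y j) z (y i); simpa [dist_eq_norm] using this
    rw [norm_sub_rev]
    linarith
  have hgcont : ContinuousOn g (Metric.closedBall (y i) (r / 2)) := by
    apply ContinuousOn.add
    · apply continuousOn_finset_sum
      intro j hj
      apply ContinuousOn.mul continuousOn_const
      apply ContinuousOn.mul continuousOn_const
      apply ContinuousOn.rpow_const
      · exact (continuous_id.sub continuous_const).norm.continuousOn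
      · intro z hz
        exact Or.inl (ne_of_gt (hposS j hj z hz))
    · exact ((hK2.continuous_fderiv (by norm_num)).norm).continuousOn
  obtain ⟨C, hC⟩ := (isCompact_closedBall (y i) (r / 2)).exists_bound_of_continuousOn hgcont
  set C1 : ℝ := max C 1 with hC1def
  have hC1pos : (0 : ℝ) < C1 := lt_of_lt_of_le one_pos (le_max_right _ _)
  have haiα : 0 < a i * α := mul_pos (ha i) hα0
  have h1α : 0 < 1 - α := by linarith
  refine ⟨min (r / 2) ((a i * α / C1) ^ ((1 - α)⁻¹)), ?_, ?_⟩
  · exact lt_min (by positivity) (Real.rpow_pos_of_pos (by positivity) _)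
  intro ε hε hεlt x hxε
  have hε2 : ε ≤ r / 2 := le_of_lt (lt_of_lt_of_le hεlt (min_le_left _ _))
  have hxball : x ∈ Metric.closedBall (y i) (r / 2) := by
    rw [Metric.mem_closedBall, dist_eq_norm, hxε]; exact hε2
  have hxne : ∀ j, x ≠ y j := by
    intro j
    by_cases hj : j = i
    · subst hj
      intro h
      rw [h, sub_self, norm_zero] at hxε
      exact absurd hxε.symm (ne_of_gt hε)
    · intro h
      have := hposS j (Finset.mem_erase.mpr ⟨hj, Finset.mem_univ j⟩) x hxball
      rw [h, sub_self, norm_zero] at this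
      exact lt_irrefl 0 this
  -- the derivative of u at x
  set D : EuclideanSpace ℝ (Fin n) →L[ℝ] ℝ :=
    -(∑ j, (a j * (α * ‖x - y j‖ ^ (α - 2))) • innerSL ℝ (x - y j)) + fderiv ℝ K x with hDdef
  have hfd : HasFDerivAt u D x := by
    rw [hu]
    apply HasFDerivAt.add
    · apply HasFDerivAt.neg
      apply HasFDerivAt.fun_sum
      intro j _
      have h := (aux_hasFDerivAt_norm_rpow α (hxne j)).const_mul (a j)
      rw [smul_smul] at h
      exact h
    · exact ((hK2.differentiable (by norm_num)) x).hasFDerivAt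
  have hgrad : gradient u x = (InnerProductSpace.toDual ℝ _).symm D :=
    (hfd.hasGradientAt).gradient
  have hinner : ⟪gradient u x, ε⁻¹ • (y i - x)⟫ = ε⁻¹ * D (y i - x) := by
    rw [hgrad, real_inner_smul_right, InnerProductSpace.toDual_symm_apply]
  rw [hinner]
  refine mul_pos (inv_pos.mpr hε) ?_
  -- compute D (y i - x)
  have hDval : D (y i - x)
      = -(∑ j, (a j * (α * ‖x - y j‖ ^ (α - 2))) * ⟪x - y j, y i - x⟫)
        + fderiv ℝ K x (y i - x) := by
    simp only [hDdef, ContinuousLinearMap.add_apply, ContinuousLinearMap.neg_apply,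
      ContinuousLinearMap.sum_apply, ContinuousLinearMap.smul_apply, innerSL_apply_apply,
      smul_eq_mul]
  have hsplit : ∑ j, (a j * (α * ‖x - y j‖ ^ (α - 2))) * ⟪x - y j, y i - x⟫
      = (a i * (α * ε ^ (α - 2))) * ⟪x - (y i : EuclideanSpace ℝ (Fin n)), y i - x⟫
        + ∑ j ∈ S, (a j * (α * ‖x - y j‖ ^ (α - 2))) * ⟪x - y j, y i - x⟫ := by
    rw [← Finset.add_sum_erase Finset.univ _ (Finset.mem_univ i), hxε]
  have hiterm : ⟪x - (y i : EuclideanSpace ℝ (Fin n)), y i - x⟫ = -(ε ^ 2) := by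
    rw [← neg_sub x (y i), inner_neg_right, real_inner_self_eq_norm_sq, hxε]
  have hpow2 : ε ^ (α - 2) * ε ^ (2 : ℕ) = ε ^ α := by
    rw [← Real.rpow_natCast ε 2, ← Real.rpow_add hε]
    norm_num
  have hnyix : ‖(y i : EuclideanSpace ℝ (Fin n)) - x‖ = ε := by rw [norm_sub_rev]; exact hxε
  -- bound on the other pole terms
  set Bv : ℝ := ∑ j ∈ S, (a j * (α * ‖x - y j‖ ^ (α - 2))) * ⟪x - y j, y i - x⟫ with hBv
  have hB : |Bv| ≤ (∑ j ∈ S, a j * (α * ‖x - y j‖ ^ (α - 1))) * ε := by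
    rw [hBv, Finset.sum_mul]
    refine le_trans (Finset.abs_sum_le_sum_abs _ _) (Finset.sum_le_sum ?_)
    intro j hj
    have hnj : 0 < ‖x - y j‖ := hposS j hj x hxball
    have hcnn : 0 ≤ a j * (α * ‖x - y j‖ ^ (α - 2)) :=
      mul_nonneg (ha j).le (mul_nonneg hα0.le (Real.rpow_nonneg (norm_nonneg _) _))
    rw [abs_mul, abs_of_nonneg hcnn]
    have hcs : |⟪x - y j, (y i : EuclideanSpace ℝ (Fin n)) - x⟫| ≤ ‖x - y j‖ * ε := by
      rw [← hnyix]
      exact abs_real_inner_le_norm _ _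
    calc a j * (α * ‖x - y j‖ ^ (α - 2)) * |⟪x - y j, (y i : EuclideanSpace ℝ (Fin n)) - x⟫|
        ≤ a j * (α * ‖x - y j‖ ^ (α - 2)) * (‖x - y j‖ * ε) :=
          mul_le_mul_of_nonneg_left hcs hcnn
      _ = a j * (α * (‖x - y j‖ ^ (α - 2) * ‖x - y j‖ ^ (1 : ℝ))) * ε := by
          rw [Real.rpow_one]; ring
      _ = a j * (α * ‖x - y j‖ ^ (α - 1)) * ε := by
          rw [← Real.rpow_add hnj]
          have h21 : α - 2 + 1 = α - 1 := by ring
          rw [h21]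
  -- bound on the K term
  have hKb : |fderiv ℝ K x ((y i : EuclideanSpace ℝ (Fin n)) - x)| ≤ ‖fderiv ℝ K x‖ * ε := by
    rw [← hnyix, ← Real.norm_eq_abs]
    exact (fderiv ℝ K x).le_opNorm _
  -- the g bound
  have hgC1 : g x ≤ C1 := by
    have h1 : g x ≤ |g x| := le_abs_self _
    have h2 : |g x| ≤ C := by rw [← Real.norm_eq_abs]; exact hC x hxball
    exact le_trans h1 (le_trans h2 (le_max_left _ _))
  have hgε : g x * ε ≤ C1 * ε := mul_le_mul_of_nonneg_right hgC1 (le_of_lt hε)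
  have hgexp : g x * ε
      = (∑ j ∈ S, a j * (α * ‖x - y j‖ ^ (α - 1))) * ε + ‖fderiv ℝ K x‖ * ε := by
    rw [hgdef]; ring
  -- the key strict inequality
  have hfin : C1 * ε < a i * α * ε ^ α := by
    have hεlt2 : ε < (a i * α / C1) ^ ((1 - α)⁻¹) := lt_of_lt_of_le hεlt (min_le_right _ _)
    have h3 : ε ^ (1 - α) < ((a i * α / C1) ^ ((1 - α)⁻¹)) ^ (1 - α) :=
      Real.rpow_lt_rpow (le_of_lt hε) hεlt2 h1α
    have h4 : ((a i * α / C1) ^ ((1 - α)⁻¹)) ^ (1 - α) = a i * α / C1 := by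
      rw [← Real.rpow_mul (by positivity), inv_mul_cancel₀ (ne_of_gt h1α), Real.rpow_one]
    have h5 : ε ^ (1 - α) * ε ^ α = ε := by
      rw [← Real.rpow_add hε]; norm_num
    have hεαpos : 0 < ε ^ α := Real.rpow_pos_of_pos hε α
    have h6 : C1 * ε ^ (1 - α) < a i * α := by
      have := mul_lt_mul_of_pos_left (h4 ▸ h3) hC1pos
      rwa [mul_div_cancel₀ _ (ne_of_gt hC1pos)] at this
    calc C1 * ε = (C1 * ε ^ (1 - α)) * ε ^ α := by rw [mul_assoc, h5]
      _ < (a i * α) * ε ^ α := mul_lt_mul_of_pos_right h6 hεαpos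
  -- assemble
  have hival : (a i * (α * ε ^ (α - 2))) * (-(ε ^ 2)) = -(a i * α * ε ^ α) := by
    have : a i * (α * ε ^ (α - 2)) * (ε ^ 2) = a i * α * (ε ^ (α - 2) * ε ^ (2 : ℕ)) := by
      norm_num; ring
    rw [mul_neg, this, hpow2]
  rw [hDval, hsplit, hiterm, hival]
  have hBv1 : Bv ≤ |Bv| := le_abs_self _
  have hKb1 : -(fderiv ℝ K x ((y i : EuclideanSpace ℝ (Fin n)) - x)) ≤ |fderiv ℝ K x ((y i : EuclideanSpace ℝ (Fin n)) - x)| := neg_le_abs _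
  linarith
end

section
/- Let n ≥ 1, p > 2, c > 0, let 𝒲(x,t) := c·t^{−n/(p(p−1))}·exp(−((p−1)/p)·(1/p)^{1/(p−1)}·(|x|/t^{1/p})^{p/(p−1)}) for x ∈ ℝⁿ, t > 0, and fix y ∈ ℝⁿ with y ≠ 0. Define V(x,t) := 𝒲(x+y,t) + 𝒲(x−y,t). Then for every t > 0: (i) V(0,t) = 2·𝒲(y,t); (ii) the spatial gradient satisfies ∇_x V(0,t) = 0; and (iii) ∂_t(V(x,t)^{p−1})|_{x=0} = 2(p−1)·(2𝒲(y,t))^{p−2}·∂_t𝒲(y,t), a quantity which takes both strictly positive and strictly negative values as t ranges over (0,∞). In particular, the superposition V of two fundamental solutions is neither a supersolution nor a subsolution of the equation ∂_t(|u|^{p−2}u) = Δ_p u. -/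
open Filter Topology

/-- The fundamental solution `𝒲(x,t)` of the homogeneous evolutionary p-Laplace
equation `∂_t(|u|^{p−2}u) = Δ_p u`, written as a function of `|x|` and `t`. -/
noncomputable def Wfund {n : ℕ} (p c : ℝ) (x : EuclideanSpace ℝ (Fin n)) (t : ℝ) : ℝ :=
  c * t ^ (-((n : ℝ) / (p * (p - 1)))) *
    Real.exp (-((p - 1) / p) * (1 / p) ^ (1 / (p - 1)) * (‖x‖ / t ^ (1 / p)) ^ (p / (p - 1)))

/-- The superposition `V(x,t) = 𝒲(x+y,t) + 𝒲(x−y,t)` of two translated fundamental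
solutions. -/
noncomputable def Vsup {n : ℕ} (p c : ℝ) (y x : EuclideanSpace ℝ (Fin n)) (t : ℝ) : ℝ :=
  Wfund p c (x + y) t + Wfund p c (x - y) t

/-- `Wfund` depends only on the norm: it is even. -/
lemma wfund_neg {n : ℕ} (p c : ℝ) (x : EuclideanSpace ℝ (Fin n)) (t : ℝ) :
    Wfund p c (-x) t = Wfund p c x t := by
  simp [Wfund, norm_neg]

/-- On `t > 0`, `Wfund` as a function of `t` has the simplified form. -/
lemma wfund_eq {n : ℕ} (p c : ℝ) (hp : 2 < p) (y : EuclideanSpace ℝ (Fin n))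
    (s : ℝ) (hs : 0 < s) :
    Wfund p c y s = c * s ^ (-((n : ℝ) / (p * (p - 1)))) *
      Real.exp (-(((p - 1) / p) * (1 / p) ^ (1 / (p - 1)) * ‖y‖ ^ (p / (p - 1))) *
        s ^ (-(1 / (p - 1)))) := by
  have hp0 : (0:ℝ) < p := by linarith
  have hp1 : (0:ℝ) < p - 1 := by linarith
  have h1 : (‖y‖ / s ^ (1/p)) ^ (p/(p-1)) = ‖y‖ ^ (p/(p-1)) * s ^ (-(1/(p-1))) := by
    rw [Real.div_rpow (norm_nonneg y) (Real.rpow_nonneg hs.le _),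
      ← Real.rpow_mul hs.le]
    rw [show (1/p) * (p/(p-1)) = 1/(p-1) by field_simp]
    rw [div_eq_mul_inv, ← Real.rpow_neg hs.le]
  rw [Wfund, h1]
  ring_nf

lemma wfund_pos {n : ℕ} {p c : ℝ} (hc : 0 < c) (y : EuclideanSpace ℝ (Fin n))
    {t : ℝ} (ht : 0 < t) : 0 < Wfund p c y t := by
  exact mul_pos (mul_pos hc (Real.rpow_pos_of_pos ht _)) (Real.exp_pos _)

/-- Explicit time derivative of `Wfund` at `t > 0`. -/
lemma wfund_hasDerivAt {n : ℕ} (p c : ℝ) (hp : 2 < p) (y : EuclideanSpace ℝ (Fin n))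
    {t : ℝ} (ht : 0 < t) :
    HasDerivAt (fun s => Wfund p c y s)
      (c * Real.exp (-(((p - 1) / p) * (1 / p) ^ (1 / (p - 1)) * ‖y‖ ^ (p / (p - 1))) *
          t ^ (-(1 / (p - 1)))) *
        t ^ (-((n : ℝ) / (p * (p - 1)))) * t⁻¹ *
        ((((p - 1) / p) * (1 / p) ^ (1 / (p - 1)) * ‖y‖ ^ (p / (p - 1))) * (1 / (p - 1)) *
            t ^ (-(1 / (p - 1))) - (n : ℝ) / (p * (p - 1)))) t := by
  set α : ℝ := (n : ℝ) / (p * (p - 1)) with hα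
  set B : ℝ := ((p - 1) / p) * (1 / p) ^ (1 / (p - 1)) * ‖y‖ ^ (p / (p - 1)) with hB
  set β : ℝ := 1 / (p - 1) with hβ
  have h1 : HasDerivAt (fun s : ℝ => s ^ (-α)) (-α * t ^ (-α - 1)) t :=
    Real.hasDerivAt_rpow_const (Or.inl ht.ne')
  have h2 : HasDerivAt (fun s : ℝ => s ^ (-β)) (-β * t ^ (-β - 1)) t :=
    Real.hasDerivAt_rpow_const (Or.inl ht.ne')
  have h3 : HasDerivAt (fun s : ℝ => -B * s ^ (-β)) (-B * (-β * t ^ (-β - 1))) t :=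
    h2.const_mul (-B)
  have h4 : HasDerivAt (fun s : ℝ => Real.exp (-B * s ^ (-β)))
      (Real.exp (-B * t ^ (-β)) * (-B * (-β * t ^ (-β - 1)))) t := h3.exp
  have h5 : HasDerivAt (fun s : ℝ => c * s ^ (-α) * Real.exp (-B * s ^ (-β)))
      (c * (-α * t ^ (-α - 1)) * Real.exp (-B * t ^ (-β)) +
        c * t ^ (-α) * (Real.exp (-B * t ^ (-β)) * (-B * (-β * t ^ (-β - 1))))) t :=
    (h1.const_mul c).mul h4
  have hev : (fun s => Wfund p c y s) =ᶠ[𝓝 t]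
      (fun s : ℝ => c * s ^ (-α) * Real.exp (-B * s ^ (-β))) :=
    eventually_of_mem (Ioi_mem_nhds ht) (fun s hs => wfund_eq p c hp y s hs)
  have h6 := h5.congr_of_eventuallyEq hev
  refine h6.congr_deriv ?_
  have e1 : t ^ (-α - 1) = t ^ (-α) * t⁻¹ := by
    rw [Real.rpow_sub ht, Real.rpow_one, div_eq_mul_inv]
  have e2 : t ^ (-β - 1) = t ^ (-β) * t⁻¹ := by
    rw [Real.rpow_sub ht, Real.rpow_one, div_eq_mul_inv]
  rw [e1, e2]
  ring

/-- `Vsup` at `x = 0` equals `2 Wfund y` for all times. -/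
lemma vsup_zero {n : ℕ} (p c : ℝ) (y : EuclideanSpace ℝ (Fin n)) (s : ℝ) :
    Vsup p c y 0 s = 2 * Wfund p c y s := by
  rw [Vsup, zero_add, zero_sub, wfund_neg]; ring

/-- The time derivative of `(Vsup at 0)^(p-1)` in explicit form. -/
lemma vsup_pow_hasDerivAt {n : ℕ} (p c : ℝ) (hp : 2 < p) (hc : 0 < c)
    (y : EuclideanSpace ℝ (Fin n)) {t : ℝ} (ht : 0 < t) :
    HasDerivAt (fun s => Vsup p c y 0 s ^ (p - 1))
      ((2 * (c * Real.exp (-(((p - 1) / p) * (1 / p) ^ (1 / (p - 1)) * ‖y‖ ^ (p / (p - 1))) *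
          t ^ (-(1 / (p - 1)))) *
        t ^ (-((n : ℝ) / (p * (p - 1)))) * t⁻¹ *
        ((((p - 1) / p) * (1 / p) ^ (1 / (p - 1)) * ‖y‖ ^ (p / (p - 1))) * (1 / (p - 1)) *
            t ^ (-(1 / (p - 1))) - (n : ℝ) / (p * (p - 1))))) * (p - 1) *
        (2 * Wfund p c y t) ^ (p - 1 - 1)) t := by
  have hW := wfund_hasDerivAt p c hp y ht
  have h2W := hW.const_mul 2
  have hWpos : 0 < 2 * Wfund p c y t := by
    have := wfund_pos (p := p) hc y ht; linarith
  have hpow := h2W.rpow_const (p := p - 1) (Or.inl hWpos.ne')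
  have hfun : (fun s => Vsup p c y 0 s ^ (p - 1)) =
      fun s => (2 * Wfund p c y s) ^ (p - 1) := by
    funext s; rw [vsup_zero]
  rw [hfun]
  convert hpow using 2

/-- The gradient at `0` of an even differentiable-or-not function is `0`. -/
lemma gradient_zero_of_even {n : ℕ} (f : EuclideanSpace ℝ (Fin n) → ℝ)
    (hf : ∀ x, f (-x) = f x) : gradient f 0 = 0 := by
  by_cases hdiff : DifferentiableAt ℝ f (0 : EuclideanSpace ℝ (Fin n))
  · have hL := hdiff.hasFDerivAt
    have hneg : HasFDerivAt (fun x : EuclideanSpace ℝ (Fin n) => -x)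
        (-(ContinuousLinearMap.id ℝ (EuclideanSpace ℝ (Fin n)))) 0 :=
      (hasFDerivAt_id (0 : EuclideanSpace ℝ (Fin n))).neg
    have hL' : HasFDerivAt f (fderiv ℝ f 0) (-(0 : EuclideanSpace ℝ (Fin n))) := by
      rw [neg_zero]; exact hL
    have hcomp := hL'.comp (0 : EuclideanSpace ℝ (Fin n)) hneg
    have hfun : (f ∘ fun x : EuclideanSpace ℝ (Fin n) => -x) = f := funext hf
    rw [hfun] at hcomp
    have huniq := hL.unique hcomp
    have hzero : fderiv ℝ f 0 = 0 := by
      have hneg' : fderiv ℝ f 0 = -(fderiv ℝ f 0) := by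
        conv_lhs => rw [huniq]
        ext v
        simp
      ext v
      have hv := congrFun (congrArg DFunLike.coe hneg') v
      simp only [ContinuousLinearMap.neg_apply] at hv
      simp only [ContinuousLinearMap.zero_apply]
      linarith
    rw [gradient, hzero, map_zero]
  · exact gradient_eq_zero_of_not_differentiableAt hdiff

/-- for `p > 2`, `c > 0`, `y ≠ 0` and `V(x,t) = 𝒲(x+y,t) + 𝒲(x−y,t)`,
for every `t > 0`: (i) `V(0,t) = 2𝒲(y,t)`; (ii) `∇_x V(0,t) = 0`; (iii)
`∂_t(V^{p−1})|_{x=0} = 2(p−1)(2𝒲(y,t))^{p−2}·∂_t𝒲(y,t)`, and this quantity takes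
both strictly positive and strictly negative values as `t` ranges over `(0,∞)`;
hence `V` is neither a supersolution nor a subsolution of `∂_t(|u|^{p−2}u) = Δ_p u`. -/
theorem stmt18 {n : ℕ} (hn : 1 ≤ n) (p c : ℝ) (hp : 2 < p) (hc : 0 < c)
    (y : EuclideanSpace ℝ (Fin n)) (hy : y ≠ 0) :
    (∀ t : ℝ, 0 < t →
      Vsup p c y 0 t = 2 * Wfund p c y t ∧
      gradient (fun x => Vsup p c y x t) 0 = 0 ∧
      deriv (fun s => Vsup p c y 0 s ^ (p - 1)) t =
        2 * (p - 1) * (2 * Wfund p c y t) ^ (p - 2) * deriv (fun s => Wfund p c y s) t) ∧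
    (∃ t₁ : ℝ, 0 < t₁ ∧ 0 < deriv (fun s => Vsup p c y 0 s ^ (p - 1)) t₁) ∧
    (∃ t₂ : ℝ, 0 < t₂ ∧ deriv (fun s => Vsup p c y 0 s ^ (p - 1)) t₂ < 0) := by
  have hp0 : (0:ℝ) < p := by linarith
  have hp1 : (0:ℝ) < p - 1 := by linarith
  have hy' : (0:ℝ) < ‖y‖ := norm_pos_iff.mpr hy
  have hn' : (0:ℝ) < (n : ℝ) := by exact_mod_cast Nat.lt_of_lt_of_le Nat.zero_lt_one hn
  -- abbreviations (as plain reals, no `set`)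
  have hα : (0:ℝ) < (n : ℝ) / (p * (p - 1)) := div_pos hn' (mul_pos hp0 hp1)
  have hA : (0:ℝ) < ((p - 1) / p * (1 / p) ^ (1 / (p - 1)) * ‖y‖ ^ (p / (p - 1))) * (1 / (p - 1)) := by
    have h1 : (0:ℝ) < (1/p) ^ (1/(p-1)) := Real.rpow_pos_of_pos (by positivity) _
    have h2 : (0:ℝ) < ‖y‖ ^ (p/(p-1)) := Real.rpow_pos_of_pos hy' _
    have h3 : (0:ℝ) < (p-1)/p := div_pos hp1 hp0
    positivity
  -- the key sign decomposition of the time derivative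
  have key : ∀ t : ℝ, 0 < t → ∃ C : ℝ, 0 < C ∧
      deriv (fun s => Vsup p c y 0 s ^ (p - 1)) t =
        C * ((((p - 1) / p * (1 / p) ^ (1 / (p - 1)) * ‖y‖ ^ (p / (p - 1))) * (1 / (p - 1))) *
              t ^ (-(1 / (p - 1))) - (n : ℝ) / (p * (p - 1))) := by
    intro t ht
    have h := (vsup_pow_hasDerivAt p c hp hc y ht).deriv
    have hW2 : (0:ℝ) < 2 * Wfund p c y t := by
      have := wfund_pos (p := p) hc y ht; linarith
    refine ⟨2 * (c * Real.exp (-(((p - 1) / p) * (1 / p) ^ (1 / (p - 1)) * ‖y‖ ^ (p / (p - 1))) *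
          t ^ (-(1 / (p - 1)))) * t ^ (-((n : ℝ) / (p * (p - 1)))) * t⁻¹) * (p - 1) *
        (2 * Wfund p c y t) ^ (p - 1 - 1), ?_, ?_⟩
    · have e1 : (0:ℝ) < t ^ (-((n : ℝ) / (p * (p - 1)))) := Real.rpow_pos_of_pos ht _
      have e2 : (0:ℝ) < (2 * Wfund p c y t) ^ (p - 1 - 1) := Real.rpow_pos_of_pos hW2 _
      have e3 : (0:ℝ) < Real.exp (-(((p - 1) / p) * (1 / p) ^ (1 / (p - 1)) * ‖y‖ ^ (p / (p - 1))) *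
          t ^ (-(1 / (p - 1)))) := Real.exp_pos _
      have e4 : (0:ℝ) < t⁻¹ := inv_pos.mpr ht
      positivity
    · rw [h]; ring
  refine ⟨?_, ?_, ?_⟩
  · intro t ht
    refine ⟨vsup_zero p c y t, ?_, ?_⟩
    · apply gradient_zero_of_even
      intro x
      have h1 : Wfund p c (-x + y) t = Wfund p c (x - y) t := by
        rw [show -x + y = -(x - y) by abel, wfund_neg]
      have h2 : Wfund p c (-x - y) t = Wfund p c (x + y) t := by
        rw [show -x - y = -(x + y) by abel, wfund_neg]
      simp only [Vsup, h1, h2]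
      ring
    · have hW := wfund_hasDerivAt p c hp y ht
      rw [(vsup_pow_hasDerivAt p c hp hc y ht).deriv, hW.deriv,
        show p - 1 - 1 = p - 2 by ring]
      ring
  · -- positive derivative at small time
    refine ⟨((((p - 1) / p * (1 / p) ^ (1 / (p - 1)) * ‖y‖ ^ (p / (p - 1))) * (1 / (p - 1))) /
        (2 * ((n : ℝ) / (p * (p - 1))))) ^ (p - 1), ?_, ?_⟩
    · exact Real.rpow_pos_of_pos (div_pos hA (by linarith)) _
    · set A : ℝ := ((p - 1) / p * (1 / p) ^ (1 / (p - 1)) * ‖y‖ ^ (p / (p - 1))) * (1 / (p - 1)) with hAdef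
      set α : ℝ := (n : ℝ) / (p * (p - 1)) with hαdef
      have hx : (0:ℝ) < A / (2 * α) := div_pos hA (by linarith)
      have ht₁ : (0:ℝ) < (A / (2 * α)) ^ (p - 1) := Real.rpow_pos_of_pos hx _
      obtain ⟨C, hC, hEq⟩ := key _ ht₁
      rw [hEq]
      have hpow : ((A / (2 * α)) ^ (p - 1)) ^ (-(1 / (p - 1))) = (A / (2 * α))⁻¹ := by
        rw [← Real.rpow_mul hx.le, show (p - 1) * (-(1 / (p - 1))) = -1 by field_simp,
          Real.rpow_neg_one]
      rw [hpow]
      have hval : A * (A / (2 * α))⁻¹ = 2 * α := by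
        field_simp
      rw [hval]
      have : (0:ℝ) < 2 * α - α := by linarith
      positivity
  · -- negative derivative at large time
    refine ⟨((2 * (((p - 1) / p * (1 / p) ^ (1 / (p - 1)) * ‖y‖ ^ (p / (p - 1))) * (1 / (p - 1)))) /
        ((n : ℝ) / (p * (p - 1)))) ^ (p - 1), ?_, ?_⟩
    · exact Real.rpow_pos_of_pos (div_pos (by linarith) hα) _
    · set A : ℝ := ((p - 1) / p * (1 / p) ^ (1 / (p - 1)) * ‖y‖ ^ (p / (p - 1))) * (1 / (p - 1)) with hAdef
      set α : ℝ := (n : ℝ) / (p * (p - 1)) with hαdef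
      have hx : (0:ℝ) < (2 * A) / α := div_pos (by linarith) hα
      have ht₂ : (0:ℝ) < ((2 * A) / α) ^ (p - 1) := Real.rpow_pos_of_pos hx _
      obtain ⟨C, hC, hEq⟩ := key _ ht₂
      rw [hEq]
      have hpow : (((2 * A) / α) ^ (p - 1)) ^ (-(1 / (p - 1))) = ((2 * A) / α)⁻¹ := by
        rw [← Real.rpow_mul hx.le, show (p - 1) * (-(1 / (p - 1))) = -1 by field_simp,
          Real.rpow_neg_one]
      rw [hpow]
      have hval : A * ((2 * A) / α)⁻¹ = α / 2 := by
        field_simp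
      rw [hval]
      have hneg : α / 2 - α < 0 := by linarith
      exact mul_neg_of_pos_of_neg hC hneg
end
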